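/- arXiv:0709.1127 — 5 statements merged into one kernel-verified Lean document; each statement's English description precedes it below -/
import Mathlib

section
/- If N ⊂ ℝ is a discrete set of nonnegative real numbers, then the set ⋃_{r=1}^∞ r(N) of all sums of r elements of N (over all r ≥ 1) is also a discrete set of nonnegative numbers. -/
open Filter Topology

/-- A subset of ℝ is discrete iff it has no accumulation points in ℝ. -/
def DiscreteSet (A : Set ℝ) : Prop := ∀ x : ℝ, ¬ AccPt x (Filter.principal A)

/-- `rSum N r` is the set `r(N)` of all sums of `r` elements of `N`. -/
def rSum (N : Set ℝ) (r : ℕ) : Set ℝ :=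
  {x | ∃ f : Fin r → ℝ, (∀ i, f i ∈ N) ∧ x = ∑ i, f i}

/-- A finite subset of ℝ has no accumulation points. -/
lemma finite_not_accPt {S : Set ℝ} (hS : S.Finite) (x : ℝ) : ¬ AccPt x (𝓟 S) := by
  rw [accPt_iff_nhds]
  intro h
  have hcl : IsClosed (S \ {x}) := (Set.Finite.diff hS : (S \ {x}).Finite).isClosed
  have hxU : x ∈ (S \ {x})ᶜ := fun h => h.2 rfl
  have hU : (S \ {x})ᶜ ∈ 𝓝 x := hcl.isOpen_compl.mem_nhds hxU
  obtain ⟨y, ⟨hyU, hyS⟩, hyx⟩ := h _ hU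
  exact hyU ⟨hyS, hyx⟩

/-- A discrete set has finite intersection with every `Icc 0 M`. -/
lemma discrete_inter_Icc_finite {N : Set ℝ} (hNd : DiscreteSet N) (M : ℝ) :
    (N ∩ Set.Icc 0 M).Finite := by
  by_contra hinf
  obtain ⟨x, -, hx⟩ := Set.Infinite.exists_accPt_of_subset_isCompact hinf
    isCompact_Icc Set.inter_subset_right
  exact hNd x (hx.mono (principal_mono.mpr Set.inter_subset_left))

lemma sums_inter_Icc_finite (N : Set ℝ) (hN0 : N ⊆ Set.Ici (0:ℝ))
    (hNd : DiscreteSet N) (M : ℝ) :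
    ((⋃ r ∈ {r : ℕ | 1 ≤ r}, rSum N r) ∩ Set.Icc 0 M).Finite := by
  classical
  have hF : (N ∩ Set.Icc 0 M).Finite := discrete_inter_Icc_finite hNd M
  set F : Finset ℝ := hF.toFinset with hFdef
  set F₀ : Finset ℝ := F.filter (fun a => 0 < a) with hF₀def
  set k : ℕ := if h : F₀.Nonempty then ⌈M / F₀.min' h⌉₊ else 0 with hkdef
  set T : Finset ℝ := Finset.image
    (fun n : ↥F₀ → Fin (k+1) => ∑ a ∈ F₀.attach, ((n a : ℕ) : ℝ) * (a : ℝ))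
    Finset.univ with hTdef
  apply Set.Finite.subset T.finite_toSet
  rintro x ⟨hxS, hx0, hxM⟩
  simp only [Set.mem_iUnion, Set.mem_setOf_eq] at hxS
  obtain ⟨r, -, f, hf, hxeq⟩ := hxS
  -- each value of f is nonneg and at most M
  have hfnn : ∀ i, 0 ≤ f i := fun i => hN0 (hf i)
  have hfle : ∀ i, f i ≤ x := by
    intro i
    rw [hxeq]
    exact Finset.single_le_sum (fun j _ => hfnn j) (Finset.mem_univ i)
  have hfF : ∀ i, f i ∈ F := by
    intro i
    rw [hFdef, Set.Finite.mem_toFinset]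
    exact ⟨hf i, hfnn i, (hfle i).trans hxM⟩
  -- fiber counts
  set c : ℝ → ℕ := fun b => (Finset.univ.filter (fun i => f i = b)).card with hcdef
  have hx1 : x = ∑ b ∈ Finset.univ.image f, (c b : ℝ) * b := by
    calc x = ∑ i, (id : ℝ → ℝ) (f i) := by simpa using hxeq
      _ = ∑ b ∈ Finset.univ.image f,
            (Finset.univ.filter (fun i => f i = b)).card • (id : ℝ → ℝ) b :=
        Finset.sum_comp (id : ℝ → ℝ) f
      _ = ∑ b ∈ Finset.univ.image f, (c b : ℝ) * b := by
        simp [hcdef, nsmul_eq_mul]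
  -- restrict to positive values
  have hx2 : x = ∑ b ∈ Finset.univ.image f ∩ F₀, (c b : ℝ) * b := by
    rw [hx1]
    refine (Finset.sum_subset Finset.inter_subset_left ?_).symm
    intro b hb hb'
    have hbF : b ∈ F := by
      obtain ⟨i, -, rfl⟩ := Finset.mem_image.mp hb
      exact hfF i
    have hb0 : b = 0 := by
      by_contra h0
      have : 0 ≤ b := by
        have := (Set.Finite.mem_toFinset hF).mp hbF
        exact this.2.1
      exact hb' (Finset.mem_inter.mpr ⟨hb, Finset.mem_filter.mpr ⟨hbF, lt_of_le_of_ne this (Ne.symm h0)⟩⟩)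
    simp [hb0]
  -- extend to all of F₀
  have hx3 : x = ∑ a ∈ F₀, (c a : ℝ) * a := by
    rw [hx2]
    refine Finset.sum_subset Finset.inter_subset_right ?_
    intro a ha ha'
    have : c a = 0 := by
      rw [hcdef]
      simp only [Finset.card_eq_zero, Finset.filter_eq_empty_iff]
      intro i _
      intro hia
      exact ha' (Finset.mem_inter.mpr ⟨Finset.mem_image.mpr ⟨i, Finset.mem_univ i, hia⟩, ha⟩)
    simp [this]
  -- bound on counts
  have hcb : ∀ a ∈ F₀, c a ≤ k := by
    intro a ha
    have hne : F₀.Nonempty := ⟨a, ha⟩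
    have hapos : 0 < a := (Finset.mem_filter.mp ha).2
    have hca : (c a : ℝ) * a ≤ x := by
      have : (c a : ℝ) * a = ∑ i ∈ Finset.univ.filter (fun i => f i = a), f i := by
        rw [Finset.sum_congr rfl (fun i hi => (Finset.mem_filter.mp hi).2)]
        simp [hcdef, mul_comm]
      rw [this, hxeq]
      exact Finset.sum_le_sum_of_subset_of_nonneg (Finset.filter_subset _ _)
        (fun i _ _ => hfnn i)
    have hεpos : 0 < F₀.min' hne := (Finset.mem_filter.mp (F₀.min'_mem hne)).2
    have hεle : F₀.min' hne ≤ a := Finset.min'_le _ _ ha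
    have hM0 : (0:ℝ) ≤ M := le_trans hx0 hxM
    have h1 : (c a : ℝ) ≤ M / a := by
      rw [le_div_iff₀ hapos]
      exact hca.trans hxM
    have h2 : M / a ≤ M / F₀.min' hne := div_le_div_of_nonneg_left hM0 hεpos hεle
    have h3 : (c a : ℝ) ≤ (⌈M / F₀.min' hne⌉₊ : ℝ) :=
      (h1.trans h2).trans (Nat.le_ceil _)
    have h4 : c a ≤ ⌈M / F₀.min' hne⌉₊ := Nat.cast_le.mp h3
    rw [hkdef, dif_pos hne]
    exact h4
  -- conclude x ∈ T
  refine Finset.mem_coe.mpr (Finset.mem_image.mpr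
    ⟨fun a => ⟨c a, Nat.lt_succ_of_le (hcb a a.2)⟩, Finset.mem_univ _, ?_⟩)
  rw [hx3, ← Finset.sum_attach F₀ (fun a => (c a : ℝ) * a)]

/-- if `N ⊆ ℝ` is a discrete set of nonnegative reals, then
`⋃_{r ≥ 1} r(N)` is also a discrete set of nonnegative reals. -/
theorem iUnion_rSum_discrete (N : Set ℝ) (hN0 : N ⊆ Set.Ici (0:ℝ))
    (hNd : DiscreteSet N) :
    (⋃ r ∈ {r : ℕ | 1 ≤ r}, rSum N r) ⊆ Set.Ici (0:ℝ) ∧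
      DiscreteSet (⋃ r ∈ {r : ℕ | 1 ≤ r}, rSum N r) := by
  have hsub : (⋃ r ∈ {r : ℕ | 1 ≤ r}, rSum N r) ⊆ Set.Ici (0:ℝ) := by
    intro x hx
    simp only [Set.mem_iUnion, Set.mem_setOf_eq] at hx
    obtain ⟨r, -, f, hf, rfl⟩ := hx
    exact Finset.sum_nonneg fun i _ => Set.mem_Ici.mp (hN0 (hf i))
  refine ⟨hsub, ?_⟩
  intro x hx
  set S := ⋃ r ∈ {r : ℕ | 1 ≤ r}, rSum N r with hSdef
  have hfin : (S ∩ Set.Icc 0 (|x| + 1)).Finite :=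
    sums_inter_Icc_finite N hN0 hNd (|x| + 1)
  apply finite_not_accPt hfin x
  rw [accPt_iff_nhds] at hx ⊢
  intro U hU
  obtain ⟨y, ⟨⟨hyU, hyb⟩, hyS⟩, hyx⟩ :=
    hx (U ∩ Metric.ball x 1) (Filter.inter_mem hU (Metric.ball_mem_nhds x one_pos))
  refine ⟨y, ⟨hyU, hyS, hsub hyS, ?_⟩, hyx⟩
  have : |y - x| < 1 := by simpa [Real.dist_eq] using hyb
  have := abs_sub_abs_le_abs_sub y x
  nlinarith [abs_nonneg y, le_abs_self y, abs_sub_abs_le_abs_sub y x, le_abs_self x]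
end

section
/- If Z ⊂ ℝ is discrete and bounded below and N ⊂ [0,∞) is discrete, then Z + ⋃_{r=1}^∞ r(N) is discrete and bounded below. -/
open Filter Pointwise

open Topology
lemma discrete_inter_Icc_finite_s3 {A : Set ℝ} (hA : DiscreteSet A) (a b : ℝ) :
    (A ∩ Set.Icc a b).Finite := by
  by_contra h
  have hi : (A ∩ Set.Icc a b).Infinite := h
  obtain ⟨x, -, hx⟩ := hi.exists_accPt_of_subset_isCompact isCompact_Icc
      Set.inter_subset_right
  exact hA x (hx.mono (principal_mono.mpr Set.inter_subset_left))

lemma not_accPt_of_finite {F : Set ℝ} (hF : F.Finite) (x : ℝ) : ¬ AccPt x (𝓟 F) := by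
  intro h
  rw [accPt_iff_nhds] at h
  have hcl : IsClosed (F \ {x}) := (hF.diff).isClosed
  obtain ⟨y, ⟨hyU, hyF⟩, hyx⟩ := h (F \ {x})ᶜ
    (hcl.isOpen_compl.mem_nhds (by simp))
  exact hyU ⟨hyF, hyx⟩

lemma discreteSet_of_finite_inter_Iic {A : Set ℝ}
    (h : ∀ M : ℝ, (A ∩ Set.Iic M).Finite) : DiscreteSet A := by
  intro x hx
  have hle : 𝓝[≠] x ⊓ 𝓟 A ≤ 𝓝[≠] x ⊓ 𝓟 (A ∩ Set.Iic (x + 1)) := by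
    refine le_inf inf_le_left ?_
    rw [← inf_principal]
    exact le_inf inf_le_right (le_trans inf_le_left (le_principal_iff.mpr
      (mem_nhdsWithin_of_mem_nhds (Iic_mem_nhds (lt_add_one x)))))
  have hx' : (𝓝[≠] x ⊓ 𝓟 A).NeBot := hx
  exact not_accPt_of_finite (h (x + 1)) x (hx'.mono hle)

lemma rSum_finite {F : Set ℝ} (hF : F.Finite) (r : ℕ) : (rSum F r).Finite := by
  have : rSum F r = (fun f : Fin r → ℝ => ∑ i, f i) '' (Set.univ.pi fun _ => F) := by
    ext x
    simp [rSum, Set.mem_pi, eq_comm]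
  rw [this]
  exact (Set.Finite.pi fun _ => hF).image _

lemma rSum_mem_bounded {N : Set ℝ} (hN0 : N ⊆ Set.Ici (0:ℝ)) {ε : ℝ} (hε : 0 < ε)
    (hεN : ∀ y ∈ N, y ≠ 0 → ε ≤ y) {B x : ℝ} (hxB : x ≤ B) {r : ℕ} (hr : 1 ≤ r)
    (hx : x ∈ rSum N r) :
    ∃ r', 1 ≤ r' ∧ r' ≤ max 1 ⌈B / ε⌉₊ ∧ x ∈ rSum (N ∩ Set.Icc 0 B) r' := by
  obtain ⟨f, hf, rfl⟩ := hx
  have hnn : ∀ i, 0 ≤ f i := fun i => hN0 (hf i)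
  have hfB : ∀ i, f i ≤ B := fun i =>
    le_trans (Finset.single_le_sum (fun j _ => hnn j) (Finset.mem_univ i)) hxB
  set s := Finset.univ.filter (fun i => f i ≠ 0) with hsdef
  have hxs : ∑ i, f i = ∑ i ∈ s, f i := (Finset.sum_filter_ne_zero _).symm
  by_cases hs : s = ∅
  · -- all entries zero
    have hall : ∀ i, f i = 0 := by
      intro i
      by_contra hne
      have : i ∈ s := by simp [hsdef, hne]
      simp [hs] at this
    have hx0 : ∑ i, f i = 0 := by simp [hall]
    have h0N : (0:ℝ) ∈ N := hall ⟨0, hr⟩ ▸ hf ⟨0, hr⟩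
    exact ⟨1, le_refl 1, le_max_left _ _, ⟨fun _ => 0,
      fun _ => ⟨h0N, Set.mem_Icc.mpr ⟨le_refl 0, by show (0:ℝ) ≤ B; linarith [hxB, hx0]⟩⟩, by simp [hx0]⟩⟩
  · have hsne : s.Nonempty := Finset.nonempty_of_ne_empty hs
    have hcard1 : 1 ≤ s.card := Finset.card_pos.mpr hsne
    have hεs : ε * s.card ≤ ∑ i ∈ s, f i := by
      calc ε * s.card = ∑ _i ∈ s, ε := by rw [Finset.sum_const, nsmul_eq_mul, mul_comm]
        _ ≤ ∑ i ∈ s, f i :=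
          Finset.sum_le_sum fun i hi => hεN _ (hf i) (by simpa [hsdef] using hi)
    have hcardR : (s.card : ℝ) ≤ B / ε := by
      rw [le_div_iff₀ hε]
      calc (s.card : ℝ) * ε = ε * s.card := mul_comm _ _
        _ ≤ ∑ i ∈ s, f i := hεs
        _ = ∑ i, f i := hxs.symm
        _ ≤ B := hxB
    have hcardk : s.card ≤ max 1 ⌈B / ε⌉₊ :=
      le_trans (Nat.cast_le.mp (le_trans hcardR (Nat.le_ceil _))) (le_max_right _ _)
    set e := s.equivFin with he
    refine ⟨s.card, hcard1, hcardk, ⟨fun j => f (e.symm j), fun j => ⟨hf _, hnn _, hfB _⟩, ?_⟩⟩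
    rw [hxs, ← Finset.sum_coe_sort s f]
    exact (Fintype.sum_equiv e.symm (fun j => f ((e.symm j) : Fin r))
      (fun i => f i) (fun j => rfl)).symm


/-- if `Z ⊆ ℝ` is discrete and bounded below and `N ⊆ [0,∞)` is
discrete, then `Z + ⋃_{r ≥ 1} r(N)` is discrete and bounded below. -/
theorem add_iUnion_rSum_discrete (Z N : Set ℝ)
    (hZd : DiscreteSet Z) (hZb : BddBelow Z)
    (hN0 : N ⊆ Set.Ici (0:ℝ)) (hNd : DiscreteSet N) :
    DiscreteSet (Z + ⋃ r ∈ {r : ℕ | 1 ≤ r}, rSum N r) ∧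
      BddBelow (Z + ⋃ r ∈ {r : ℕ | 1 ≤ r}, rSum N r) := by
  obtain ⟨c, hc⟩ := hZb
  set S := ⋃ r ∈ {r : ℕ | 1 ≤ r}, rSum N r with hS
  have hSmem : ∀ x ∈ S, ∃ r : ℕ, 1 ≤ r ∧ x ∈ rSum N r := by
    intro x hx
    simp only [hS, Set.mem_iUnion, Set.mem_setOf_eq] at hx
    obtain ⟨r, hr, h⟩ := hx
    exact ⟨r, hr, h⟩
  have hSnn : ∀ x ∈ S, 0 ≤ x := by
    intro x hx
    obtain ⟨r, hr, f, hf, rfl⟩ := hSmem x hx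
    exact Finset.sum_nonneg fun i _ => hN0 (hf i)
  -- get the gap ε around 0 in N
  have h0 := hNd 0
  rw [accPt_iff_nhds] at h0
  push_neg at h0
  obtain ⟨U, hU, hU2⟩ := h0
  obtain ⟨ε, hε, hball⟩ := Metric.mem_nhds_iff.mp hU
  have hεN : ∀ y ∈ N, y ≠ 0 → ε ≤ y := by
    intro y hy hy0
    by_contra hlt
    push_neg at hlt
    exact hy0 (hU2 y ⟨hball (by
      simp only [Metric.mem_ball, Real.dist_eq, sub_zero]
      rw [abs_of_nonneg (hN0 hy)]
      exact hlt), hy⟩)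
  have key : ∀ M : ℝ, ((Z + S) ∩ Set.Iic M).Finite := by
    intro M
    have hZfin : (Z ∩ Set.Iic M).Finite :=
      (discrete_inter_Icc_finite_s3 hZd c M).subset
        (fun x hx => ⟨hx.1, hc hx.1, hx.2⟩)
    set B := M - c with hB
    have hFfin : (N ∩ Set.Icc 0 B).Finite := discrete_inter_Icc_finite_s3 hNd 0 B
    have hSfin : (S ∩ Set.Iic B).Finite := by
      have hsub : S ∩ Set.Iic B ⊆
          ⋃ r' ∈ (Finset.Icc 1 (max 1 ⌈B/ε⌉₊) : Finset ℕ), rSum (N ∩ Set.Icc 0 B) r' := by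
        rintro x ⟨hxS, hxB⟩
        obtain ⟨r, hr, hxr⟩ := hSmem x hxS
        obtain ⟨r', h1, h2, h3⟩ := rSum_mem_bounded hN0 hε hεN hxB hr hxr
        exact Set.mem_iUnion₂.mpr ⟨r', Finset.mem_Icc.mpr ⟨h1, h2⟩, h3⟩
      exact (Set.Finite.biUnion (Finset.Icc 1 _).finite_toSet
        (fun r _ => rSum_finite hFfin r)).subset hsub
    have hsub2 : (Z + S) ∩ Set.Iic M ⊆ (Z ∩ Set.Iic M) + (S ∩ Set.Iic B) := by
      rintro x ⟨hx, hxM⟩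
      obtain ⟨z, hz, t, ht, rfl⟩ := Set.mem_add.mp hx
      have ht0 : 0 ≤ t := hSnn t ht
      have hzc : c ≤ z := hc hz
      have hxM' : z + t ≤ M := hxM
      exact Set.add_mem_add ⟨hz, by simp only [Set.mem_Iic]; linarith⟩
        ⟨ht, by simp only [Set.mem_Iic, hB]; linarith⟩
    exact (hZfin.add hSfin).subset hsub2
  refine ⟨discreteSet_of_finite_inter_Iic key, ⟨c, fun x hx => ?_⟩⟩
  obtain ⟨z, hz, t, ht, rfl⟩ := Set.mem_add.mp hx
  linarith [hc hz, hSnn t ht]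
end

section
/- Let u_1,…,u_k ∈ Λ_K(G)^n with ν̄(u_i) = 0, let U be their span over Λ_K(G), and let V be a Λ_K(G)-submodule of Λ_K(G)^n containing U. Suppose φ: V → V satisfies: (i) for all v ∈ V either φ(v) = v or ν̄(φ(v)) > ν̄(v); (ii) if φ(v) ≠ v then v − φ(v) lies in the K-linear span of T^{ν̄(v)}u_1,…,T^{ν̄(v)}u_k. Then for every v ∈ V there exists u ∈ U with φ(v−u) = v−u, and either u = 0 or ν̄(u) = ν̄(v) and T^{−ν̄(u)}u lies in the span of u_1,…,u_k over Λ_K(G)_{≥0}. -/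
set_option synthInstance.maxHeartbeats 1000000
set_option maxHeartbeats 1000000
open Classical
noncomputable section

variable {K : Type*} [CommRing K]

def InNov (G : AddSubgroup ℝ) (x : HahnSeries ℝ K) : Prop :=
  x.support ⊆ G ∧ ∀ C : ℝ, {g ∈ x.support | g < C}.Finite

/-- A Novikov support set is bounded below. -/
lemma InNov.bddBelow {G : AddSubgroup ℝ} {x : HahnSeries ℝ K} (h : InNov G x) :
    BddBelow x.support := by
  rcases x.support.eq_empty_or_nonempty with he | ⟨a, ha⟩
  · simp [he]
  · have hmem : ∀ g ∈ x.support, g < a + 1 → g ∈ (h.2 (a+1)).toFinset := fun g hg hlt =>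
      (Set.Finite.mem_toFinset _).2 ⟨hg, hlt⟩
    refine ⟨((h.2 (a+1)).toFinset.min' ⟨a, hmem a ha (by linarith)⟩ : ℝ), ?_⟩
    intro g hg
    by_cases hga : g < a + 1
    · exact Finset.min'_le _ _ (hmem g hg hga)
    · have := Finset.min'_le (h.2 (a+1)).toFinset a (hmem a ha (by linarith))
      push_neg at hga; linarith

def NovikovSubring (K : Type*) [CommRing K] (G : AddSubgroup ℝ) :
    Subring (HahnSeries ℝ K) where
  carrier := {x | InNov G x}
  zero_mem' := by
    constructor <;> simp [HahnSeries.support_zero]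
  one_mem' := by
    have hsub : (1 : HahnSeries ℝ K).support ⊆ {0} := by
      rw [← HahnSeries.single_zero_one]; exact HahnSeries.support_single_subset
    constructor
    · exact fun g hg => by rw [Set.mem_singleton_iff.1 (hsub hg)]; exact G.zero_mem
    · intro C
      apply Set.Finite.subset (Set.finite_singleton (0:ℝ))
      rintro g ⟨hg, -⟩
      exact hsub hg
  add_mem' := by
    rintro x y ⟨hx1, hx2⟩ ⟨hy1, hy2⟩
    constructor
    · exact fun g hg => by
        rcases (HahnSeries.support_add_subset _ _ hg) with h | h
        exacts [hx1 h, hy1 h]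
    · intro C
      apply Set.Finite.subset ((hx2 C).union (hy2 C))
      rintro g ⟨hg, hgC⟩
      rcases HahnSeries.support_add_subset _ _ hg with h | h
      · exact Or.inl ⟨h, hgC⟩
      · exact Or.inr ⟨h, hgC⟩
  neg_mem' := by
    rintro x ⟨hx1, hx2⟩
    constructor
    · simpa [HahnSeries.support_neg] using hx1
    · simpa [HahnSeries.support_neg] using hx2
  mul_mem' := by
    rintro x y ⟨hx1, hx2⟩ ⟨hy1, hy2⟩
    rcases (InNov.bddBelow ⟨hx1, hx2⟩) with ⟨mx, hmx⟩
    rcases (InNov.bddBelow ⟨hy1, hy2⟩) with ⟨my, hmy⟩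
    constructor
    · intro g hg
      obtain ⟨i, hi, j, hj, rfl⟩ := HahnSeries.support_mul_subset hg
      exact G.add_mem (hx1 hi) (hy1 hj)
    · intro C
      apply Set.Finite.subset (((hx2 (C - my)).image2 (· + ·) (hy2 (C - mx))))
      rintro g ⟨hg, hgC⟩
      obtain ⟨i, hi, j, hj, rfl⟩ := HahnSeries.support_mul_subset hg
      have hgC' : i + j < C := hgC
      exact Set.mem_image2.2 ⟨i, ⟨hi, by have := hmy hj; linarith [hgC']⟩,
        j, ⟨hj, by have := hmx hi; linarith [hgC']⟩, rfl⟩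

/-- ν, the minimal-exponent valuation on Hahn series, with ν(0) = ∞. -/
def nuH (x : HahnSeries ℝ K) : EReal := if x = 0 then ⊤ else (x.order : EReal)

/-- ν̄ on vectors of Hahn series: the minimum of ν over the coordinates. -/
def nubarH {n : ℕ} (v : Fin n → HahnSeries ℝ K) : EReal := ⨅ i, nuH (v i)

variable {G : AddSubgroup ℝ}

/-- ν on the Novikov ring. -/
def nuS (x : NovikovSubring K G) : EReal := nuH (x : HahnSeries ℝ K)

/-- ν̄ on vectors over the Novikov ring. -/
def nubarS {n : ℕ} (v : Fin n → NovikovSubring K G) : EReal :=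
  nubarH fun i => (v i : HahnSeries ℝ K)

section AuxBasic

variable {K : Type*} [CommRing K] {G : AddSubgroup ℝ}

lemma nuH_zero : nuH (0 : HahnSeries ℝ K) = ⊤ := by simp [nuH]

lemma le_nuH_iff {x : HahnSeries ℝ K} {c : EReal} :
    c ≤ nuH x ↔ ∀ g : ℝ, (g : EReal) < c → x.coeff g = 0 := by
  constructor
  · intro h g hg
    by_cases hx : x = 0
    · simp [hx]
    · rw [nuH, if_neg hx] at h
      exact HahnSeries.coeff_eq_zero_of_lt_order (by exact_mod_cast lt_of_lt_of_le hg h)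
  · intro h
    by_cases hx : x = 0
    · simp [nuH, hx]
    · rw [nuH, if_neg hx]
      by_contra hlt
      push_neg at hlt
      exact (HahnSeries.coeff_order_eq_zero.not.2 hx) (h _ (by exact_mod_cast hlt))

lemma coeff_eq_zero_of_lt_nuH {x : HahnSeries ℝ K} {g : ℝ} (h : (g : EReal) < nuH x) :
    x.coeff g = 0 :=
  le_nuH_iff.1 le_rfl g h

lemma nuH_le_of_coeff_ne_zero {x : HahnSeries ℝ K} {g : ℝ} (h : x.coeff g ≠ 0) :
    nuH x ≤ (g : EReal) := by
  by_contra hc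
  exact h (coeff_eq_zero_of_lt_nuH (not_le.1 hc))

lemma le_nubarS_iff {n : ℕ} {w : Fin n → NovikovSubring K G} {c : EReal} :
    c ≤ nubarS w ↔ ∀ i, ∀ g : ℝ, (g : EReal) < c → ((w i : HahnSeries ℝ K)).coeff g = 0 := by
  rw [nubarS, nubarH, le_iInf_iff]
  constructor
  · intro h i g hg
    exact le_nuH_iff.1 (h i) g hg
  · intro h i
    exact le_nuH_iff.2 (h i)

lemma coeff_eq_zero_of_lt_nubarS {n : ℕ} {w : Fin n → NovikovSubring K G} {g : ℝ}
    (h : (g : EReal) < nubarS w) (i : Fin n) : ((w i : HahnSeries ℝ K)).coeff g = 0 :=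
  le_nubarS_iff.1 le_rfl i g h

lemma nubarS_le_nuH {n : ℕ} (w : Fin n → NovikovSubring K G) (i : Fin n) :
    nubarS w ≤ nuH (w i : HahnSeries ℝ K) :=
  iInf_le _ i

lemma nubarS_eq_top_iff {n : ℕ} {w : Fin n → NovikovSubring K G} :
    nubarS w = ⊤ ↔ w = 0 := by
  constructor
  · intro h
    funext i
    have h1 : nuH ((w i : HahnSeries ℝ K)) = ⊤ := top_le_iff.1 (h ▸ nubarS_le_nuH w i)
    rw [nuH] at h1
    split_ifs at h1 with hx
    · exact Subtype.ext (by simpa using hx)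
    · exact absurd h1 (by simp [EReal.coe_ne_top])
  · rintro rfl
    rw [nubarS, nubarH]
    simp [nuH]

/-- the infimum defining `nubarS` is attained when `w ≠ 0`. -/
lemma exists_nubarS_eq {n : ℕ} {w : Fin n → NovikovSubring K G} (hw : w ≠ 0) :
    ∃ i, (w i : HahnSeries ℝ K) ≠ 0 ∧
      nubarS w = (((w i : HahnSeries ℝ K)).order : EReal) := by
  have hne : ∃ i, (w i : HahnSeries ℝ K) ≠ 0 := by
    by_contra h
    push_neg at h
    exact hw (funext fun i => Subtype.ext (by simpa using h i))
  obtain ⟨i0, hi0⟩ := hne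
  have : Nonempty (Fin n) := ⟨i0⟩
  obtain ⟨imin, hmin⟩ := Finite.exists_min (fun i => nuH ((w i : HahnSeries ℝ K)))
  have heq : nubarS w = nuH ((w imin : HahnSeries ℝ K)) :=
    le_antisymm (nubarS_le_nuH w imin) (le_iInf hmin)
  have hne' : (w imin : HahnSeries ℝ K) ≠ 0 := by
    intro h0
    have := hmin i0
    rw [h0, nuH_zero, top_le_iff, nuH, if_neg hi0] at this
    exact (EReal.coe_ne_top _) this
  exact ⟨imin, hne', by rw [heq, nuH, if_neg hne']⟩

lemma nubarS_ne_bot {n : ℕ} (w : Fin n → NovikovSubring K G) : nubarS w ≠ ⊥ := by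
  by_cases hw : w = 0
  · rw [hw, nubarS_eq_top_iff.2 rfl]
    simp
  · obtain ⟨i, _, h⟩ := exists_nubarS_eq hw
    rw [h]
    simp

end AuxBasic
section AuxMul

variable {K : Type*} [CommRing K] {G : AddSubgroup ℝ}

/-- coefficient extraction as an additive monoid hom -/
def coeffHom (g : ℝ) : HahnSeries ℝ K →+ K where
  toFun x := x.coeff g
  map_zero' := rfl
  map_add' x y := rfl

lemma sum_coeff {ι : Type*} (s : Finset ι) (f : ι → HahnSeries ℝ K) (g : ℝ) :
    (∑ x ∈ s, f x).coeff g = ∑ x ∈ s, (f x).coeff g :=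
  map_sum (coeffHom g) f s

lemma single_mul_coeff (b : ℝ) (c : K) (x : HahnSeries ℝ K) (g : ℝ) :
    (HahnSeries.single b c * x).coeff g = c * x.coeff (g - b) := by
  have := HahnSeries.coeff_single_mul_add (r := c) (x := x) (a := g - b) (b := b)
  rwa [sub_add_cancel] at this

lemma mul_coeff_zero_of (x y : HahnSeries ℝ K) (g : ℝ)
    (hx : ∀ a ≤ g, x.coeff a = 0) (hy : ∀ b < (0:ℝ), y.coeff b = 0) :
    (x * y).coeff g = 0 := by
  rw [HahnSeries.coeff_mul]
  refine Finset.sum_eq_zero fun ij hij => ?_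
  rw [Finset.mem_addAntidiagonal] at hij
  by_cases h1 : ij.1 ≤ g
  · rw [hx _ h1, zero_mul]
  · have : ij.2 < 0 := by
      have := hij.2.2
      push_neg at h1
      linarith
    rw [hy _ this, mul_zero]

lemma single_mem_nov {g : ℝ} (hg : g ∈ G) (c : K) :
    HahnSeries.single g c ∈ NovikovSubring K G := by
  constructor
  · intro a ha
    have := HahnSeries.support_single_subset ha
    rw [Set.mem_singleton_iff.1 this]
    exact hg
  · intro C
    apply Set.Finite.subset (Set.finite_singleton g)
    rintro a ⟨ha, -⟩
    exact HahnSeries.support_single_subset ha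

lemma smul_single_one_mul (a : K) (b : ℝ) (x : HahnSeries ℝ K) :
    a • (HahnSeries.single b (1:K) * x) = HahnSeries.single b a * x := by
  ext g
  rw [HahnSeries.coeff_smul, single_mul_coeff, single_mul_coeff, smul_eq_mul, one_mul]

lemma min_le_nubarS_add {n : ℕ} (x y : Fin n → NovikovSubring K G) :
    min (nubarS x) (nubarS y) ≤ nubarS (x + y) := by
  rw [le_nubarS_iff]
  intro i g hg
  have hx := coeff_eq_zero_of_lt_nubarS (lt_of_lt_of_le hg (min_le_left _ _)) i
  have hy := coeff_eq_zero_of_lt_nubarS (lt_of_lt_of_le hg (min_le_right _ _)) i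
  have : (((x + y) i : HahnSeries ℝ K)) = (x i : HahnSeries ℝ K) + (y i : HahnSeries ℝ K) := rfl
  rw [this, HahnSeries.coeff_add, hx, hy, add_zero]

lemma min_le_nubarS_sub {n : ℕ} (x y : Fin n → NovikovSubring K G) :
    min (nubarS x) (nubarS y) ≤ nubarS (x - y) := by
  rw [le_nubarS_iff]
  intro i g hg
  have hx := coeff_eq_zero_of_lt_nubarS (lt_of_lt_of_le hg (min_le_left _ _)) i
  have hy := coeff_eq_zero_of_lt_nubarS (lt_of_lt_of_le hg (min_le_right _ _)) i
  have : (((x - y) i : HahnSeries ℝ K)) = (x i : HahnSeries ℝ K) - (y i : HahnSeries ℝ K) := rfl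
  rw [this, HahnSeries.coeff_sub, hx, hy, sub_zero]

end AuxMul
section AuxComb

/-- The key combinatorial fact: a strictly increasing real sequence whose successive values
are drawn from a fixed "Novikov-finite" base set or from earlier values shifted by
a positive step from a Novikov-finite set of steps must be unbounded. -/
lemma comb_unbounded (r : ℕ → ℝ) (hr : StrictMono r)
    (S0 F : Set ℝ) (hS0 : ∀ C : ℝ, {x ∈ S0 | x < C}.Finite)
    (hF : ∀ C : ℝ, {x ∈ F | x < C}.Finite) (hF0 : ∀ s ∈ F, 0 ≤ s)
    (hstep : ∀ m : ℕ, r (m + 1) ∈ S0 ∨ ∃ l ≤ m, ∃ s ∈ F, r (m + 1) = r l + s) :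
    ∀ C : ℝ, ∃ m, C < r m := by
  intro C
  by_contra hc
  push_neg at hc
  -- restricted finite sets
  set S0' : Set ℝ := {x ∈ S0 | x < C + 1} with hS0'def
  have hS0'fin : S0'.Finite := hS0 (C + 1)
  set F' : Set ℝ := {x ∈ F | 0 < x ∧ x < C - r 0 + 1} with hF'def
  have hF'fin : F'.Finite := (hF (C - r 0 + 1)).subset (fun x hx => ⟨hx.1, hx.2.2⟩)
  have hstep' : ∀ m : ℕ, r (m + 1) ∈ S0' ∨ ∃ l ≤ m, ∃ s ∈ F', r (m + 1) = r l + s := by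
    intro m
    rcases hstep m with h | ⟨l, hl, s, hs, heq⟩
    · exact Or.inl ⟨h, lt_of_le_of_lt (hc _) (by linarith)⟩
    · refine Or.inr ⟨l, hl, s, ⟨hs, ?_, ?_⟩, heq⟩
      · have : r l < r (m + 1) := hr (Nat.lt_succ_of_le hl)
        linarith
      · have h0 : r 0 ≤ r l := hr.monotone (Nat.zero_le l)
        have := hc (m + 1)
        linarith
  by_cases hFe : F'.Nonempty
  · -- positive minimal step
    have hne : hF'fin.toFinset.Nonempty := by rwa [Set.Finite.toFinset_nonempty]
    set f := hF'fin.toFinset.min' hne with hfdef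
    have hfF' : f ∈ F' := by
      have := hF'fin.toFinset.min'_mem hne
      rwa [Set.Finite.mem_toFinset] at this
    have hfpos : 0 < f := hfF'.2.1
    have hfle : ∀ s ∈ F', f ≤ s := fun s hs => Finset.min'_le _ _ (hF'fin.mem_toFinset.2 hs)
    -- supremum
    have hbdd : BddAbove (Set.range r) := ⟨C, by rintro x ⟨m, rfl⟩; exact hc m⟩
    set L : ℝ := sSup (Set.range r) with hLdef
    have hlt : ∀ m, r m < L :=
      fun m => lt_of_lt_of_le (hr (Nat.lt_succ_self m)) (le_csSup hbdd ⟨m + 1, rfl⟩)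
    obtain ⟨x, ⟨m0, rfl⟩, hm0⟩ := exists_lt_of_lt_csSup (Set.range_nonempty r)
      (show L - f < L by linarith)
    -- forbidden finite set
    set B : Set ℝ := S0' ∪ ⋃ l ∈ Set.Iio m0, (fun s => r l + s) '' F' with hBdef
    have hBfin : B.Finite := by
      refine hS0'fin.union (Set.Finite.biUnion (Set.finite_Iio m0) fun l _ => hF'fin.image _)
    have hpre : {m : ℕ | r (m + 1) ∈ B}.Finite := by
      have : Set.InjOn (fun m : ℕ => r (m + 1)) {m : ℕ | r (m + 1) ∈ B} :=
        fun a _ b _ h => Nat.succ_injective (hr.injective h)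
      exact Set.Finite.of_finite_image (hBfin.subset (by rintro x ⟨m, hm, rfl⟩; exact hm)) this
    obtain ⟨m, hmB, hmgt⟩ := hpre.infinite_compl.exists_gt m0
    have hmB' : r (m + 1) ∉ B := hmB
    rcases hstep' m with h | ⟨l, hl, s, hs, heq⟩
    · exact hmB' (Or.inl h)
    · by_cases hlm0 : l < m0
      · exact hmB' (Or.inr (Set.mem_biUnion hlm0 ⟨s, hs, heq.symm⟩))
      · push_neg at hlm0
        have h1 : L - f < r l := lt_of_lt_of_le hm0 (hr.monotone hlm0)
        have h2 : f ≤ s := hfle s hs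
        have := hlt (m + 1)
        rw [heq] at this
        linarith
  · -- no positive steps: all successor values lie in the finite set S0'
    rw [Set.not_nonempty_iff_eq_empty] at hFe
    have hall : ∀ m : ℕ, r (m + 1) ∈ S0' := by
      intro m
      rcases hstep' m with h | ⟨l, _, s, hs, _⟩
      · exact h
      · rw [hFe] at hs; exact absurd hs (Set.notMem_empty s)
    have : Set.InjOn (fun m : ℕ => r (m + 1)) Set.univ :=
      fun a _ b _ h => Nat.succ_injective (hr.injective h)
    have hinf : S0'.Infinite := Set.infinite_of_injective_forall_mem
      (f := fun m : ℕ => r (m + 1)) (fun a b h => Nat.succ_injective (hr.injective h)) hall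
    exact hinf hS0'fin

end AuxComb
section AuxFinish

variable {K : Type*} [CommRing K] {G : AddSubgroup ℝ}

lemma nubar_sub_eq {n : ℕ} (x w : Fin n → NovikovSubring K G)
    (h : nubarS x < nubarS w) : nubarS (x - w) = nubarS x := by
  refine le_antisymm ?_ ?_
  · by_contra hlt
    push_neg at hlt
    have h2 : nubarS x < min (nubarS (x - w)) (nubarS w) := lt_min hlt h
    have h3 : min (nubarS (x - w)) (nubarS w) ≤ nubarS ((x - w) + w) := min_le_nubarS_add _ _
    rw [sub_add_cancel] at h3
    exact absurd (lt_of_lt_of_le h2 h3) (lt_irrefl _)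
  · have := min_le_nubarS_sub x w
    rwa [min_eq_left h.le] at this

lemma coe_sub_apply {n : ℕ} (x w : Fin n → NovikovSubring K G) (i : Fin n) :
    (((x - w) i : NovikovSubring K G) : HahnSeries ℝ K)
      = ((x i : NovikovSubring K G) : HahnSeries ℝ K) - ((w i : NovikovSubring K G) : HahnSeries ℝ K) := rfl

lemma span_of_rep {n k : ℕ} (u : Fin k → (Fin n → NovikovSubring K G))
    (d : Fin n → NovikovSubring K G) (b : Fin k → NovikovSubring K G)
    (hid : ∀ i, ((d i : NovikovSubring K G) : HahnSeries ℝ K)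
      = ∑ j, ((b j : NovikovSubring K G) : HahnSeries ℝ K) * ((u j i : NovikovSubring K G) : HahnSeries ℝ K)) :
    d ∈ Submodule.span (NovikovSubring K G) (Set.range u) := by
  have hd : d = ∑ j, b j • u j := by
    funext i
    apply Subtype.ext
    rw [hid i]
    have h1 : (∑ j, b j • u j) i = ∑ j, b j * u j i := by
      rw [Finset.sum_apply]
      rfl
    rw [h1]
    push_cast
    rfl
  rw [hd]
  exact Submodule.sum_mem _ fun j _ => Submodule.smul_mem _ _ (Submodule.subset_span ⟨j, rfl⟩)

lemma final_packaging {n k : ℕ} (u : Fin k → (Fin n → NovikovSubring K G))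
    (v w : Fin n → NovikovSubring K G) (b : Fin k → NovikovSubring K G) (r0 : ℝ)
    (hr0G : r0 ∈ G)
    (hnub : nubarS (v - w) = ((r0 : ℝ) : EReal))
    (hnubv : nubarS v = ((r0 : ℝ) : EReal))
    (hb : ∀ j, ∀ g : ℝ, g < r0 → ((b j : HahnSeries ℝ K)).coeff g = 0)
    (hid : ∀ i, ((v i : HahnSeries ℝ K) - (w i : HahnSeries ℝ K))
      = ∑ j, (b j : HahnSeries ℝ K) * (u j i : HahnSeries ℝ K)) :
    (v - w ∈ Submodule.span (NovikovSubring K G) (Set.range u)) ∧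
    (nubarS (v - w) = nubarS v ∧
      ∃ a : Fin k → NovikovSubring K G, (∀ j, 0 ≤ nuS (a j)) ∧
        (fun i => HahnSeries.single (-(nubarS (v - w)).toReal) (1 : K)
            * (((v - w) i : HahnSeries ℝ K)))
          = ∑ j, (fun i => ((a j : HahnSeries ℝ K) * (u j i : HahnSeries ℝ K)))) := by
  have hid' : ∀ i, (((v - w) i : HahnSeries ℝ K))
      = ∑ j, (b j : HahnSeries ℝ K) * (u j i : HahnSeries ℝ K) := by
    intro i; rw [coe_sub_apply]; exact hid i
  refine ⟨span_of_rep u (v - w) b hid', by rw [hnub, hnubv], ?_⟩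
  have htr : (nubarS (v - w)).toReal = r0 := by rw [hnub, EReal.toReal_coe]
  refine ⟨fun j => ⟨HahnSeries.single (-r0) (1:K) * (b j : HahnSeries ℝ K),
      mul_mem (single_mem_nov (neg_mem hr0G) 1) (b j).2⟩, ?_, ?_⟩
  · intro j
    rw [nuS]
    refine le_nuH_iff.2 fun g hg => ?_
    have hg' : g < 0 := by exact_mod_cast hg
    rw [single_mul_coeff, one_mul, hb j]
    have : g - -r0 = g + r0 := by ring
    rw [this]; linarith
  · funext i
    rw [htr, hid' i, Finset.sum_apply]
    rw [Finset.mul_sum]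
    refine Finset.sum_congr rfl fun j _ => ?_
    rw [← mul_assoc]
end AuxFinish
set_option synthInstance.maxHeartbeats 1000000 in
/-- fixed point lemma: let `u_1,…,u_k ∈ Λ_K(G)^n` with
`ν̄(u_j) = 0`, `U` their `Λ_K(G)`-span, `V ⊇ U` a submodule, and `φ : V → V`
a (not necessarily additive) map such that (i) `φ(v) = v` or
`ν̄(φ(v)) > ν̄(v)`, and (ii) if `φ(v) ≠ v` then `v − φ(v)` lies in the
`K`-span of `T^{ν̄(v)}u_1,…,T^{ν̄(v)}u_k`.  Then every `v ∈ V` admits `u ∈ U`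
with `φ(v−u) = v−u`, and `u = 0` or `ν̄(u) = ν̄(v)` with `T^{−ν̄(u)}u` in the
`Λ_K(G)_{≥0}`-span of `u_1,…,u_k`. -/
theorem fixed_point_lemma {K : Type*} [CommRing K] (G : AddSubgroup ℝ) (n k : ℕ)
    (u : Fin k → (Fin n → NovikovSubring K G))
    (hu : ∀ j, nubarS (u j) = 0)
    (V : Submodule (NovikovSubring K G) (Fin n → NovikovSubring K G))
    (hUV : Submodule.span (NovikovSubring K G) (Set.range u) ≤ V)
    (φ : V → V)
    (h1 : ∀ v : V, φ v = v ∨ nubarS (v : Fin n → NovikovSubring K G)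
        < nubarS ((φ v : V) : Fin n → NovikovSubring K G))
    (h2 : ∀ v : V, φ v ≠ v → ∃ a : Fin k → K,
      (fun i => ((v : Fin n → NovikovSubring K G) i : HahnSeries ℝ K)
          - (((φ v : V) : Fin n → NovikovSubring K G) i : HahnSeries ℝ K))
        = ∑ j, a j • (fun i =>
            HahnSeries.single ((nubarS (v : Fin n → NovikovSubring K G)).toReal)
              (1 : K) * ((u j i : HahnSeries ℝ K)))) :
    ∀ v : V, ∃ w : V, φ w = w ∧
      (v : Fin n → NovikovSubring K G) - (w : Fin n → NovikovSubring K G) ∈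
        Submodule.span (NovikovSubring K G) (Set.range u) ∧
      ((v : Fin n → NovikovSubring K G) - (w : Fin n → NovikovSubring K G) = 0 ∨
        (nubarS ((v : Fin n → NovikovSubring K G) - (w : Fin n → NovikovSubring K G))
            = nubarS (v : Fin n → NovikovSubring K G) ∧
          ∃ a : Fin k → NovikovSubring K G, (∀ j, 0 ≤ nuS (a j)) ∧
            (fun i => HahnSeries.single
                (-(nubarS ((v : Fin n → NovikovSubring K G) - (w : Fin n → NovikovSubring K G))).toReal) (1 : K)
              * ((((v : Fin n → NovikovSubring K G) - (w : Fin n → NovikovSubring K G)) i : HahnSeries ℝ K)))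
              = ∑ j, (fun i => ((a j : HahnSeries ℝ K) * (u j i : HahnSeries ℝ K))))) := by
  intro v
  classical
  set seq : ℕ → V := fun m => φ^[m] v with hseqdef
  have hseq0 : seq 0 = v := rfl
  have hseqS : ∀ m, seq (m + 1) = φ (seq m) := fun m => Function.iterate_succ_apply' φ m v
  have hfix_of_top : ∀ x : V, nubarS (x : Fin n → NovikovSubring K G) = ⊤ → φ x = x := by
    intro x hx
    rcases h1 x with h | h
    · exact h
    · rw [hx] at h; exact absurd h not_top_lt
  have hne_of_nfix : ∀ m, φ (seq m) ≠ seq m →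
      ((seq m : V) : Fin n → NovikovSubring K G) ≠ 0 := by
    intro m hm h0
    exact hm (hfix_of_top _ (nubarS_eq_top_iff.2 h0))
  have hlt_of_nfix : ∀ m, φ (seq m) ≠ seq m →
      nubarS ((seq m : V) : Fin n → NovikovSubring K G)
        < nubarS ((seq (m+1) : V) : Fin n → NovikovSubring K G) := by
    intro m hm
    rw [hseqS m]
    exact (h1 (seq m)).resolve_left hm
  set ρ : ℕ → ℝ := fun m => (nubarS ((seq m : V) : Fin n → NovikovSubring K G)).toReal with hρdef
  have hρeq : ∀ m, φ (seq m) ≠ seq m →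
      nubarS ((seq m : V) : Fin n → NovikovSubring K G) = ((ρ m : ℝ) : EReal) := by
    intro m hm
    have htop : nubarS ((seq m : V) : Fin n → NovikovSubring K G) ≠ ⊤ :=
      ne_top_of_lt (hlt_of_nfix m hm)
    exact (EReal.coe_toReal htop (nubarS_ne_bot _)).symm
  have hρG : ∀ m, φ (seq m) ≠ seq m → ρ m ∈ G := by
    intro m hm
    obtain ⟨i, hne, hord⟩ := exists_nubarS_eq (hne_of_nfix m hm)
    have heq : ρ m = (((seq m : V) : Fin n → NovikovSubring K G) i : HahnSeries ℝ K).order := by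
      have h' := (hρeq m hm).symm.trans hord
      exact_mod_cast h'
    rw [heq]
    exact (((seq m : V) : Fin n → NovikovSubring K G) i).2.1
      ((HahnSeries.mem_support _ _).2 (HahnSeries.coeff_order_eq_zero.not.2 hne))
  set am : ℕ → Fin k → K := fun m =>
    if h : φ (seq m) ≠ seq m then Classical.choose (h2 (seq m) h) else 0 with hamdef
  have ham : ∀ m, φ (seq m) ≠ seq m → ∀ i,
      (((seq m : V) : Fin n → NovikovSubring K G) i : HahnSeries ℝ K)
        - (((seq (m+1) : V) : Fin n → NovikovSubring K G) i : HahnSeries ℝ K)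
        = ∑ j, HahnSeries.single (ρ m) (am m j) * (u j i : HahnSeries ℝ K) := by
    intro m hm i
    have hsp := Classical.choose_spec (h2 (seq m) hm)
    have h' := congrFun hsp i
    have ha : am m = Classical.choose (h2 (seq m) hm) := dif_pos hm
    rw [hseqS m]
    rw [ha]
    rw [h', Finset.sum_apply]
    refine Finset.sum_congr rfl fun j _ => ?_
    rw [Pi.smul_apply]
    exact smul_single_one_mul _ _ _
  have htele : ∀ M : ℕ, (∀ l, l < M → φ (seq l) ≠ seq l) → ∀ i,
      ((v : Fin n → NovikovSubring K G) i : HahnSeries ℝ K)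
        - (((seq M : V) : Fin n → NovikovSubring K G) i : HahnSeries ℝ K)
        = ∑ l ∈ Finset.range M, ∑ j,
            HahnSeries.single (ρ l) (am l j) * (u j i : HahnSeries ℝ K) := by
    intro M
    induction M with
    | zero => intro _ i; rw [hseq0]; simp
    | succ M ih =>
      intro hl i
      have hp := ih (fun l hl' => hl l (Nat.lt_succ_of_lt hl')) i
      have hs := ham M (hl M (Nat.lt_succ_self M)) i
      rw [Finset.sum_range_succ, ← hp, ← hs]
      ring
  have hchain : ∀ q, (∀ l, l < q → φ (seq l) ≠ seq l) → ∀ p, p < q →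
      nubarS ((seq p : V) : Fin n → NovikovSubring K G)
        < nubarS ((seq q : V) : Fin n → NovikovSubring K G) := by
    intro q
    induction q with
    | zero => intro _ p hp; exact absurd hp (Nat.not_lt_zero p)
    | succ q ih =>
      intro hq p hp
      have hlast := hlt_of_nfix q (hq q (Nat.lt_succ_self q))
      rcases Nat.lt_succ_iff_lt_or_eq.1 hp with h | h
      · exact lt_trans (ih (fun l hl => hq l (Nat.lt_succ_of_lt hl)) p h) hlast
      · rw [h]; exact hlast
  have hu_nonneg : ∀ j i, ∀ g : ℝ, g < 0 → ((u j i : HahnSeries ℝ K)).coeff g = 0 := by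
    intro j i g hg
    refine coeff_eq_zero_of_lt_nubarS ?_ i
    rw [hu j]
    exact_mod_cast hg
  by_cases hfix : ∃ M, φ (seq M) = seq M
  · -- Case A: some iterate is fixed by φ
    set M := Nat.find hfix with hMdef
    have hM : φ (seq M) = seq M := Nat.find_spec hfix
    have hMlt : ∀ l, l < M → φ (seq l) ≠ seq l := fun l hl => Nat.find_min hfix hl
    by_cases hzero : (v : Fin n → NovikovSubring K G)
        - ((seq M : V) : Fin n → NovikovSubring K G) = 0
    · exact ⟨seq M, hM, by rw [hzero]; exact Submodule.zero_mem _, Or.inl hzero⟩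
    · have hM0 : M ≠ 0 := by
        intro h0
        apply hzero
        rw [h0, hseq0, sub_self]
      have hMpos : 0 < M := Nat.pos_of_ne_zero hM0
      have h00 : φ (seq 0) ≠ seq 0 := hMlt 0 hMpos
      have hmemb : ∀ j, (∑ l ∈ Finset.range M, HahnSeries.single (ρ l) (am l j))
          ∈ NovikovSubring K G := by
        intro j
        exact Subring.sum_mem _ fun l hl =>
          single_mem_nov (hρG l (hMlt l (Finset.mem_range.1 hl))) _
      set b : Fin k → NovikovSubring K G := fun j => ⟨_, hmemb j⟩ with hbdef
      have hρ0le : ∀ l, l < M → ρ 0 ≤ ρ l := by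
        intro l hl
        rcases Nat.eq_zero_or_pos l with h | hlpos
        · rw [h]
        · have hc := hchain l (fun l' hl' => hMlt l' (lt_trans hl' hl)) 0 hlpos
          rw [hρeq 0 h00, hρeq l (hMlt l hl)] at hc
          exact_mod_cast hc.le
      have hb : ∀ j, ∀ g : ℝ, g < ρ 0 → ((b j : HahnSeries ℝ K)).coeff g = 0 := by
        intro j g hg
        show (∑ l ∈ Finset.range M, HahnSeries.single (ρ l) (am l j)).coeff g = 0
        rw [sum_coeff]
        refine Finset.sum_eq_zero fun l hl => ?_
        refine HahnSeries.coeff_single_of_ne ?_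
        have := hρ0le l (Finset.mem_range.1 hl)
        intro he
        rw [he] at hg
        linarith
      have hid : ∀ i, ((v : Fin n → NovikovSubring K G) i : HahnSeries ℝ K)
          - (((seq M : V) : Fin n → NovikovSubring K G) i : HahnSeries ℝ K)
          = ∑ j, (b j : HahnSeries ℝ K) * (u j i : HahnSeries ℝ K) := by
        intro i
        rw [htele M hMlt i, Finset.sum_comm]
        refine Finset.sum_congr rfl fun j _ => ?_
        exact (Finset.sum_mul _ _ _).symm
      have hvM : nubarS (v : Fin n → NovikovSubring K G)
          < nubarS ((seq M : V) : Fin n → NovikovSubring K G) := hchain M hMlt 0 hMpos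
      have hnub := nubar_sub_eq _ _ hvM
      have hρv : nubarS (v : Fin n → NovikovSubring K G) = ((ρ 0 : ℝ) : EReal) := hρeq 0 h00
      obtain ⟨hspan, hnn, ha⟩ := final_packaging u
        (v : Fin n → NovikovSubring K G) ((seq M : V) : Fin n → NovikovSubring K G)
        b (ρ 0) (hρG 0 h00) (hnub.trans hρv) hρv hb hid
      exact ⟨seq M, hM, hspan, Or.inr ⟨hnn, ha⟩⟩
  · -- Case B: no iterate is ever fixed; the valuations must escape to infinity
    push_neg at hfix
    have hnf : ∀ m, φ (seq m) ≠ seq m := hfix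
    have hρmono : StrictMono ρ := by
      apply strictMono_nat_of_lt_succ
      intro m
      have hlt := hlt_of_nfix m (hnf m)
      rw [hρeq m (hnf m), hρeq (m+1) (hnf (m+1))] at hlt
      exact_mod_cast hlt
    have hub : ∀ C : ℝ, ∃ m, C < ρ m := by
      refine comb_unbounded ρ hρmono
        (⋃ i, ((v : Fin n → NovikovSubring K G) i : HahnSeries ℝ K).support)
        (⋃ j, ⋃ i, ((u j i : HahnSeries ℝ K)).support) ?_ ?_ ?_ ?_
      · intro C
        refine Set.Finite.subset
          (Set.finite_iUnion fun i => ((v : Fin n → NovikovSubring K G) i).2.2 C) ?_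
        rintro x ⟨hx, hC⟩
        obtain ⟨i, hi⟩ := Set.mem_iUnion.1 hx
        exact Set.mem_iUnion.2 ⟨i, hi, hC⟩
      · intro C
        refine Set.Finite.subset
          (Set.finite_iUnion fun j => Set.finite_iUnion fun i => (u j i).2.2 C) ?_
        rintro x ⟨hx, hC⟩
        obtain ⟨j, hj⟩ := Set.mem_iUnion.1 hx
        obtain ⟨i, hi⟩ := Set.mem_iUnion.1 hj
        exact Set.mem_iUnion.2 ⟨j, Set.mem_iUnion.2 ⟨i, hi, hC⟩⟩
      · intro s hs
        obtain ⟨j, hj⟩ := Set.mem_iUnion.1 hs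
        obtain ⟨i, hi⟩ := Set.mem_iUnion.1 hj
        by_contra hneg
        push_neg at hneg
        exact hi (hu_nonneg j i s hneg)
      · intro m
        obtain ⟨i, hne, hord⟩ := exists_nubarS_eq (hne_of_nfix (m+1) (hnf (m+1)))
        have hcoeff : (((seq (m+1) : V) : Fin n → NovikovSubring K G) i
            : HahnSeries ℝ K).coeff (ρ (m+1)) ≠ 0 := by
          have heq : ρ (m+1) = (((seq (m+1) : V) : Fin n → NovikovSubring K G) i
              : HahnSeries ℝ K).order := by
            have h' := (hρeq (m+1) (hnf (m+1))).symm.trans hord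
            exact_mod_cast h'
          rw [heq]
          exact HahnSeries.coeff_order_eq_zero.not.2 hne
        have ht := htele (m+1) (fun l _ => hnf l) i
        by_cases hv : ((v : Fin n → NovikovSubring K G) i : HahnSeries ℝ K).coeff (ρ (m+1)) ≠ 0
        · exact Or.inl (Set.mem_iUnion.2 ⟨i, (HahnSeries.mem_support _ _).2 hv⟩)
        · push_neg at hv
          right
          have hc2 := congrArg (fun x : HahnSeries ℝ K => x.coeff (ρ (m+1))) ht
          simp only [HahnSeries.coeff_sub, Pi.sub_apply] at hc2
          have hsum : (∑ l ∈ Finset.range (m+1), ∑ j,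
              HahnSeries.single (ρ l) (am l j) * (u j i : HahnSeries ℝ K)).coeff (ρ (m+1)) ≠ 0 := by
            intro h0
            apply hcoeff
            rw [hv, h0] at hc2
            rwa [zero_sub, neg_eq_zero] at hc2
          rw [sum_coeff] at hsum
          obtain ⟨l, hl, hl0⟩ := Finset.exists_ne_zero_of_sum_ne_zero hsum
          rw [sum_coeff] at hl0
          obtain ⟨j, _, hj0⟩ := Finset.exists_ne_zero_of_sum_ne_zero hl0
          rw [single_mul_coeff] at hj0
          have hcu : ((u j i : HahnSeries ℝ K)).coeff (ρ (m+1) - ρ l) ≠ 0 :=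
            fun h => hj0 (by rw [h, mul_zero])
          refine ⟨l, Nat.lt_succ_iff.1 (Finset.mem_range.1 hl), ρ (m+1) - ρ l, ?_, by ring⟩
          exact Set.mem_iUnion.2 ⟨j, Set.mem_iUnion.2 ⟨i, (HahnSeries.mem_support _ _).2 hcu⟩⟩
    have hge : ∀ g : ℝ, ∃ m0 : ℕ, ∀ m, m0 ≤ m → g < ρ m := by
      intro g
      obtain ⟨m0, h⟩ := hub g
      exact ⟨m0, fun m hm => lt_of_lt_of_le h (hρmono.monotone hm)⟩
    -- construct the limit coefficients
    set cco : Fin k → ℝ → K :=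
      fun j g => if h : ∃ m, ρ m = g then am h.choose j else 0 with hccodef
    have hcc_rm : ∀ j m, cco j (ρ m) = am m j := by
      intro j m
      have hex : ∃ m', ρ m' = ρ m := ⟨m, rfl⟩
      show (if h : ∃ m', ρ m' = ρ m then am h.choose j else 0) = am m j
      rw [dif_pos hex]
      have hcm : hex.choose = m := hρmono.injective hex.choose_spec
      rw [hcm]
    have hcc_supp : ∀ j g, cco j g ≠ 0 → ∃ m, ρ m = g := by
      intro j g h
      by_contra hno
      apply h
      show (if h : ∃ m, ρ m = g then am h.choose j else 0) = 0
      rw [dif_neg hno]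
    have hwf : ∀ j, (Function.support (cco j)).IsPWO := by
      intro j
      refine Set.IsWF.isPWO ?_
      rw [Set.isWF_iff_no_descending_seq]
      intro f hf hmem
      obtain ⟨m0, hm0⟩ := hge (f 0)
      have hall : ∀ q : ℕ, f q ∈ ρ '' (Set.Iio m0) := by
        intro q
        obtain ⟨m, hm⟩ := hcc_supp j (f q) (hmem q)
        refine ⟨m, ?_, hm⟩
        by_contra hmm
        simp only [Set.mem_Iio, not_lt] at hmm
        have h1 := hm0 m hmm
        have h2 : f q ≤ f 0 := hf.antitone (Nat.zero_le q)
        rw [hm] at h1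
        exact absurd (lt_of_le_of_lt h2 h1) (lt_irrefl _)
      exact Set.infinite_of_injective_forall_mem hf.injective hall
        (Set.Finite.image _ (Set.finite_Iio m0))
    set cf : Fin k → HahnSeries ℝ K := fun j => ⟨cco j, hwf j⟩ with hcfdef
    have hcf_coeff : ∀ j g, (cf j).coeff g = cco j g := fun j g => rfl
    have hcfmem : ∀ j, cf j ∈ NovikovSubring K G := by
      intro j
      constructor
      · intro g hg
        obtain ⟨m, rfl⟩ := hcc_supp j g hg
        exact hρG m (hnf m)
      · intro C
        obtain ⟨m0, hm0⟩ := hge C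
        refine Set.Finite.subset ((Set.finite_Iio m0).image ρ) ?_
        rintro g ⟨hg, hC⟩
        obtain ⟨m, rfl⟩ := hcc_supp j g hg
        refine ⟨m, ?_, rfl⟩
        by_contra hmm
        simp only [Set.mem_Iio, not_lt] at hmm
        exact absurd (hm0 m hmm) (not_lt.2 hC.le)
    set b : Fin k → NovikovSubring K G := fun j => ⟨cf j, hcfmem j⟩ with hbdef
    have hb : ∀ j, ∀ g : ℝ, g < ρ 0 → ((b j : HahnSeries ℝ K)).coeff g = 0 := by
      intro j g hg
      by_contra h
      obtain ⟨m, rfl⟩ := hcc_supp j g h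
      have := hρmono.monotone (Nat.zero_le m)
      exact absurd (lt_of_le_of_lt this hg) (lt_irrefl _)
    have hid : ∀ i, ((v : Fin n → NovikovSubring K G) i : HahnSeries ℝ K)
        = ∑ j, (cf j) * (u j i : HahnSeries ℝ K) := by
      intro i
      ext g
      obtain ⟨m0, hm0⟩ := hge g
      have hL : ((v : Fin n → NovikovSubring K G) i : HahnSeries ℝ K).coeff g
          = ∑ l ∈ Finset.range m0, ∑ j,
              (HahnSeries.single (ρ l) (am l j) * (u j i : HahnSeries ℝ K)).coeff g := by
        have ht := htele m0 (fun l _ => hnf l) i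
        have hs0 : (((seq m0 : V) : Fin n → NovikovSubring K G) i : HahnSeries ℝ K).coeff g = 0 := by
          refine coeff_eq_zero_of_lt_nubarS ?_ i
          rw [hρeq m0 (hnf m0)]
          exact_mod_cast hm0 m0 le_rfl
        have hc2 := congrArg (fun x : HahnSeries ℝ K => x.coeff g) ht
        simp only [HahnSeries.coeff_sub, Pi.sub_apply] at hc2
        rw [hs0, sub_zero] at hc2
        rw [hc2, sum_coeff]
        exact Finset.sum_congr rfl fun l _ => sum_coeff _ _ _
      have hR : ∀ j, ((cf j) * (u j i : HahnSeries ℝ K)).coeff g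
          = ∑ l ∈ Finset.range m0,
              (HahnSeries.single (ρ l) (am l j) * (u j i : HahnSeries ℝ K)).coeff g := by
        intro j
        set cfin : HahnSeries ℝ K :=
          ∑ l ∈ Finset.range m0, HahnSeries.single (ρ l) (am l j) with hcfin
        have hfin_coeff : ∀ g' : ℝ, g' ≤ g → cfin.coeff g' = cco j g' := by
          intro g' hg'
          by_cases hex : ∃ m, ρ m = g'
          · obtain ⟨m, rfl⟩ := hex
            have hmlt : m < m0 := by
              by_contra hmm
              push_neg at hmm
              exact absurd (hm0 m hmm) (not_lt.2 hg')
            rw [hcfin, sum_coeff, Finset.sum_eq_single m]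
            · rw [HahnSeries.coeff_single_same, hcc_rm]
            · intro l _ hlm
              exact HahnSeries.coeff_single_of_ne fun he => hlm (hρmono.injective he.symm)
            · intro hm'
              exact absurd (Finset.mem_range.2 hmlt) hm'
          · have h0 : cco j g' = 0 := by
              show (if h : ∃ m, ρ m = g' then am h.choose j else 0) = 0
              rw [dif_neg hex]
            rw [h0, hcfin, sum_coeff]
            exact Finset.sum_eq_zero fun l _ =>
              HahnSeries.coeff_single_of_ne fun he => hex ⟨l, he.symm⟩
        have htail : ∀ g' : ℝ, g' ≤ g → (cf j - cfin).coeff g' = 0 := by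
          intro g' hg'
          rw [HahnSeries.coeff_sub, hcf_coeff, hfin_coeff g' hg', sub_self]
        have hsplit : cf j = cfin + (cf j - cfin) := by ring
        rw [hsplit, add_mul, HahnSeries.coeff_add,
          mul_coeff_zero_of (cf j - cfin) ((u j i : HahnSeries ℝ K)) g htail (hu_nonneg j i),
          add_zero, hcfin, Finset.sum_mul, sum_coeff]
      calc ((v : Fin n → NovikovSubring K G) i : HahnSeries ℝ K).coeff g
          = ∑ l ∈ Finset.range m0, ∑ j,
              (HahnSeries.single (ρ l) (am l j) * (u j i : HahnSeries ℝ K)).coeff g := hL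
        _ = ∑ j, ∑ l ∈ Finset.range m0,
              (HahnSeries.single (ρ l) (am l j) * (u j i : HahnSeries ℝ K)).coeff g :=
            Finset.sum_comm
        _ = ∑ j, ((cf j) * (u j i : HahnSeries ℝ K)).coeff g :=
            Finset.sum_congr rfl fun j _ => (hR j).symm
        _ = (∑ j, (cf j) * (u j i : HahnSeries ℝ K)).coeff g := (sum_coeff _ _ _).symm
    have hφ0 : φ 0 = 0 := by
      refine hfix_of_top 0 (nubarS_eq_top_iff.2 ?_)
      simp
    have hd0 : (v : Fin n → NovikovSubring K G) - (((0 : V) : Fin n → NovikovSubring K G))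
        = (v : Fin n → NovikovSubring K G) := by simp
    have hvne : nubarS (v : Fin n → NovikovSubring K G) = ((ρ 0 : ℝ) : EReal) := hρeq 0 (hnf 0)
    have hid' : ∀ i, ((v : Fin n → NovikovSubring K G) i : HahnSeries ℝ K)
        - ((((0 : V) : Fin n → NovikovSubring K G)) i : HahnSeries ℝ K)
        = ∑ j, (b j : HahnSeries ℝ K) * (u j i : HahnSeries ℝ K) := by
      intro i
      have h0 : ((((0 : V) : Fin n → NovikovSubring K G)) i : HahnSeries ℝ K) = 0 := by simp
      rw [h0, sub_zero]
      exact hid i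
    have hnubd : nubarS ((v : Fin n → NovikovSubring K G)
        - (((0 : V) : Fin n → NovikovSubring K G))) = ((ρ 0 : ℝ) : EReal) := by
      rw [hd0]
      exact hvne
    obtain ⟨hspan, hnn, ha⟩ := final_packaging u (v : Fin n → NovikovSubring K G)
      (((0 : V) : Fin n → NovikovSubring K G)) b (ρ 0) (hρG 0 (hnf 0)) hnubd hvne hb hid'
    exact ⟨0, hφ0, hspan, Or.inr ⟨hnn, ha⟩⟩
end
end

section
/- Let K be a Noetherian ring, A an n×m matrix over Λ_K(G), and t⃗ = (t_1,…,t_n) ∈ ℝ^n. Define ν̄_{t⃗}(a_1,…,a_n) = min_i (ν(a_i) − t_i). Then there is γ ∈ ℝ depending only on t⃗ and A such that for every w ∈ Λ_K(G)^n there exists x_0 ∈ Λ_K(G)^m with ν̄(x_0) ≥ ν̄_{t⃗}(w) − γ and ν̄_{t⃗}(w − A x_0) = sup_{x ∈ Λ_K(G)^m} ν̄_{t⃗}(w − A x). -/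
set_option synthInstance.maxHeartbeats 1000000
set_option maxHeartbeats 1000000
open Classical
noncomputable section

variable {K : Type*} [CommRing K]

variable {G : AddSubgroup ℝ}

/-- The shifted valuation `ν̄_t(a) = min_i (ν(a_i) − t_i)` on vectors. -/
def nubartH {K : Type*} [CommRing K] {n : ℕ} (t : Fin n → ℝ)
    (v : Fin n → HahnSeries ℝ K) : EReal :=
  ⨅ i, (nuH (v i) - ((t i : ℝ) : EReal))

/-- `ν̄_t` on vectors over the Novikov ring. -/
def nubartS {K : Type*} [CommRing K] {G : AddSubgroup ℝ} {n : ℕ} (t : Fin n → ℝ)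
    (v : Fin n → NovikovSubring K G) : EReal :=
  nubartH t fun i => (v i : HahnSeries ℝ K)

namespace BA
open HahnSeries

variable {K : Type*} [CommRing K] {G : AddSubgroup ℝ}

/-! ### basic coefficient API -/

lemma innov (x : NovikovSubring K G) : InNov G (x : HahnSeries ℝ K) := x.2

lemma supp_sub_G (x : NovikovSubring K G) {s : ℝ}
    (hs : (x : HahnSeries ℝ K).coeff s ≠ 0) : s ∈ G :=
  x.2.1 hs

lemma coe_eq_zero {x : NovikovSubring K G} : (x : HahnSeries ℝ K) = 0 ↔ x = 0 :=
  ZeroMemClass.coe_eq_zero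

lemma single_mem {g : ℝ} (hg : g ∈ G) (r : K) :
    HahnSeries.single g r ∈ NovikovSubring K G := by
  constructor
  · intro s hs
    rw [Set.mem_singleton_iff.1 (HahnSeries.support_single_subset hs)]; exact hg
  · intro C
    apply Set.Finite.subset (Set.finite_singleton g)
    rintro s ⟨hs, -⟩
    exact HahnSeries.support_single_subset hs

/-- `T^g` as an element of the Novikov ring. -/
def Tg (g : ℝ) (hg : g ∈ G) : NovikovSubring K G := ⟨HahnSeries.single g 1, single_mem hg 1⟩

/-- constant `κ` as an element of the Novikov ring. -/
def Ck (κ : K) : NovikovSubring K G := ⟨HahnSeries.single 0 κ, single_mem G.zero_mem κ⟩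

lemma single_mul_coeff' (r : K) (g : ℝ) (x : HahnSeries ℝ K) (s : ℝ) :
    (HahnSeries.single g r * x).coeff s = r * x.coeff (s - g) := by
  have := HahnSeries.coeff_single_mul_add (r := r) (x := x) (a := s - g) (b := g)
  rwa [sub_add_cancel] at this

lemma Tg_mul_coeff (g : ℝ) (hg : g ∈ G) (x : NovikovSubring K G) (s : ℝ) :
    ((Tg g hg * x : NovikovSubring K G) : HahnSeries ℝ K).coeff s
      = (x : HahnSeries ℝ K).coeff (s - g) := by
  show ((HahnSeries.single g 1 * (x : HahnSeries ℝ K)).coeff s) = _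
  rw [single_mul_coeff', one_mul]

lemma Ck_mul_coeff (κ : K) (x : NovikovSubring K G) (s : ℝ) :
    ((Ck κ * x : NovikovSubring K G) : HahnSeries ℝ K).coeff s
      = κ * (x : HahnSeries ℝ K).coeff s := by
  show ((HahnSeries.single (0:ℝ) κ * (x : HahnSeries ℝ K)).coeff s) = _
  rw [single_mul_coeff', sub_zero]

lemma mul_coeff_eq_zero {a b : HahnSeries ℝ K} {α β s : ℝ}
    (ha : ∀ u, u < α → a.coeff u = 0) (hb : ∀ u, u < β → b.coeff u = 0)
    (hs : s < α + β) : (a * b).coeff s = 0 := by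
  rw [HahnSeries.coeff_mul]
  apply Finset.sum_eq_zero
  rintro ⟨u, v⟩ huv
  rw [Finset.mem_addAntidiagonal] at huv
  obtain ⟨hu, hv, huvs⟩ := huv
  exfalso
  have h1 : ¬ (u < α) := fun h => hu (ha u h)
  have h2 : ¬ (v < β) := fun h => hv (hb v h)
  push_neg at h1 h2
  linarith

/-- a lower bound for the support of a Hahn series. -/
def lbd (x : HahnSeries ℝ K) : ℝ := if x = 0 then 0 else x.order

lemma lbd_spec (x : HahnSeries ℝ K) {s : ℝ} (hs : s < lbd x) : x.coeff s = 0 := by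
  unfold lbd at hs
  split at hs
  · simp_all
  · exact HahnSeries.coeff_eq_zero_of_lt_order hs

lemma le_max_unbot' {T : Finset ℝ} {a : ℝ} (h : a ∈ T) : a ≤ T.max.unbotD 0 := by
  rcases hT : T.max with _ | b
  · exact absurd (Finset.max_eq_bot.1 hT ▸ h) (Finset.notMem_empty a)
  · have := Finset.le_max h
    rw [hT, show (some b : WithBot ℝ) = (b : WithBot ℝ) from rfl] at this
    show a ≤ b
    exact_mod_cast this

/-! ### "finite below any level" sets -/

def FB (X : Set ℝ) : Prop := ∀ C : ℝ, {s ∈ X | s < C}.Finite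

lemma FB.subset {X Y : Set ℝ} (h : FB Y) (hXY : X ⊆ Y) : FB X :=
  fun C => (h C).subset (fun s hs => ⟨hXY hs.1, hs.2⟩)

lemma FB.union {X Y : Set ℝ} (hX : FB X) (hY : FB Y) : FB (X ∪ Y) := by
  intro C
  apply ((hX C).union (hY C)).subset
  rintro s ⟨hs | hs, hsC⟩
  · exact Or.inl ⟨hs, hsC⟩
  · exact Or.inr ⟨hs, hsC⟩

lemma FB_support (x : NovikovSubring K G) : FB ((x : HahnSeries ℝ K).support) := x.2.2

lemma FB.isPWO {X : Set ℝ} (h : FB X) : X.IsPWO := by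
  apply Set.IsWF.isPWO
  rw [Set.isWF_iff_no_descending_seq]
  intro f hf hmem
  have hfin : {s ∈ X | s < f 0 + 1}.Finite := h (f 0 + 1)
  have hinj : Function.Injective (fun k : ℕ => f (k+1)) := fun a b hab => by
    have := hf.injective hab; omega
  have hmem' : ∀ k : ℕ, f (k+1) ∈ {s ∈ X | s < f 0 + 1} := fun k =>
    ⟨hmem _, by have := hf (Nat.succ_pos k); linarith⟩
  exact (Set.infinite_of_injective_forall_mem hinj hmem') hfin


/-! ### iterated sum sets -/

/-- sums of at most `k` elements of `D`. -/
def iterSum (D : Set ℝ) : ℕ → Set ℝ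
  | 0 => {0}
  | (k+1) => Set.image2 (· + ·) (iterSum D k) (insert 0 D)

lemma iterSum_nonneg {D : Set ℝ} (hD : ∀ d ∈ D, (0:ℝ) ≤ d) :
    ∀ k, ∀ s ∈ iterSum D k, (0:ℝ) ≤ s := by
  intro k
  induction k with
  | zero => rintro s hs; rw [Set.mem_singleton_iff.1 hs]
  | succ k ih =>
    rintro s hs
    obtain ⟨a, ha, d, hd, rfl⟩ := hs
    rcases hd with rfl | hd
    · simpa using ih a ha
    · exact add_nonneg (ih a ha) (hD d hd)

lemma iterSum_mono_succ {D : Set ℝ} (k : ℕ) : iterSum D k ⊆ iterSum D (k+1) := by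
  intro s hs
  exact ⟨s, hs, 0, Set.mem_insert 0 D, add_zero s⟩

lemma iterSum_finite {F : Set ℝ} (hF : F.Finite) :
    ∀ k, (iterSum F k).Finite
  | 0 => Set.finite_singleton 0
  | (k+1) => Set.Finite.image2 _ (iterSum_finite hF k) (hF.insert 0)

/-- key counting bound: the union of all `iterSum D k` is finite below any level. -/
lemma iterSum_fb {D : Set ℝ} (hD : FB D) (hD0 : ∀ d ∈ D, (0:ℝ) ≤ d) (E : ℝ) :
    {s ∈ ⋃ k, iterSum D k | s < E}.Finite := by
  classical
  set P : Set ℝ := {d ∈ D | 0 < d ∧ d < E} with hP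
  have hPfin : P.Finite := (hD E).subset (fun d hd => ⟨hd.1, hd.2.2⟩)
  rcases Set.eq_empty_or_nonempty P with hPe | hPne
  · -- no small positive elements: everything below E in the closure is 0
    have key : ∀ k, ∀ x ∈ iterSum D k, x < E → x = 0 := by
      intro k
      induction k with
      | zero => intro x hx _; exact Set.mem_singleton_iff.1 hx
      | succ k ih =>
        rintro x hx hxE
        obtain ⟨a, ha, d, hd, rfl⟩ := hx
        have hxE' : a + d < E := hxE
        have ha0 : 0 ≤ a := iterSum_nonneg hD0 k a ha
        have hd0 : 0 ≤ d := by
          rcases hd with rfl | hd; · exact le_refl 0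
          · exact hD0 d hd
        have haE : a < E := by linarith
        have ha' : a = 0 := ih a ha haE
        rcases hd with rfl | hd
        · simp [ha']
        · have : d = 0 := by
            by_contra hdne
            have : d ∈ P := ⟨hd, lt_of_le_of_ne hd0 (Ne.symm hdne), by linarith⟩
            rw [hPe] at this; exact this
          simp [ha', this]
    apply (Set.finite_singleton (0:ℝ)).subset
    rintro s ⟨hs, hsE⟩
    obtain ⟨_, ⟨k, rfl⟩, hk⟩ := hs
    exact key k s hk hsE
  · -- small positive elements have a positive minimum δ
    have hFne : hPfin.toFinset.Nonempty := by rwa [Set.Finite.toFinset_nonempty]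
    obtain ⟨δ, hδmem, hδmin⟩ : ∃ δ ∈ hPfin.toFinset, ∀ d ∈ hPfin.toFinset, δ ≤ d :=
      ⟨hPfin.toFinset.min' hFne, hPfin.toFinset.min'_mem hFne,
        fun d hd => hPfin.toFinset.min'_le d hd⟩
    have hδP : δ ∈ P := (Set.Finite.mem_toFinset _).1 hδmem
    have hδpos : 0 < δ := hδP.2.1
    have hδle : ∀ d ∈ P, δ ≤ d := fun d hd => hδmin d ((Set.Finite.mem_toFinset _).2 hd)
    -- every element of iterSum D k below E lies in some iterSum ↑F j with j·δ ≤ x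
    have key : ∀ k, ∀ x ∈ iterSum D k, x < E →
        ∃ j : ℕ, (j : ℝ) * δ ≤ x ∧ x ∈ iterSum (↑hPfin.toFinset : Set ℝ) j := by
      intro k
      induction k with
      | zero =>
        intro x hx _
        exact ⟨0, by simp [Set.mem_singleton_iff.1 hx], hx⟩
      | succ k ih =>
        rintro x hx hxE
        obtain ⟨a, ha, d, hd, rfl⟩ := hx
        have hxE' : a + d < E := hxE
        have ha0 : 0 ≤ a := iterSum_nonneg hD0 k a ha
        have hd0 : 0 ≤ d := by
          rcases hd with rfl | hd; · exact le_refl 0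
          · exact hD0 d hd
        obtain ⟨j, hjb, hjm⟩ := ih a ha (by linarith)
        rcases eq_or_lt_of_le hd0 with rfl | hdpos
        · exact ⟨j, by simpa using hjb, by simpa using hjm⟩
        · have hdD : d ∈ D := by
            rcases hd with rfl | hd; · exact absurd hdpos (lt_irrefl 0)
            · exact hd
          have hdP : d ∈ P := ⟨hdD, hdpos, by linarith⟩
          refine ⟨j + 1, ?_, ⟨a, hjm, d, ?_, rfl⟩⟩
          · have := hδle d hdP
            show ((j+1 : ℕ) : ℝ) * δ ≤ a + d
            push_cast
            nlinarith
          · exact Set.mem_insert_of_mem 0 ((Set.Finite.mem_toFinset _).2 hdP)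
    -- conclude
    set N : ℕ := Nat.ceil (E / δ) with hN
    have hsub : {s ∈ ⋃ k, iterSum D k | s < E} ⊆
        ⋃ j ∈ Finset.range (N + 1), iterSum (↑hPfin.toFinset : Set ℝ) j := by
      rintro s ⟨hs, hsE⟩
      obtain ⟨_, ⟨k, rfl⟩, hk⟩ := hs
      obtain ⟨j, hjb, hjm⟩ := key k s hk hsE
      have hjN : j ≤ N := by
        have h1 : (j : ℝ) * δ < E := lt_of_le_of_lt hjb hsE
        have h2 : (j : ℝ) < E / δ := by
          rw [lt_div_iff₀ hδpos]; exact h1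
        have h3 : E / δ ≤ (N : ℝ) := Nat.le_ceil _
        exact_mod_cast le_of_lt (lt_of_lt_of_le h2 h3)
      exact Set.mem_biUnion (Finset.mem_range.2 (Nat.lt_succ_of_le hjN)) hjm
    apply Set.Finite.subset ?_ hsub
    apply Set.Finite.biUnion (Finset.range (N+1)).finite_toSet
    intro j _
    exact iterSum_finite (Finset.finite_toSet _) j

/-- `B + ⋃ₖ iterSum D k` is finite below any level. -/
lemma FB_add_iterSum {B D : Set ℝ} {b0 : ℝ} (hB : FB B) (hBb : ∀ b ∈ B, b0 ≤ b)
    (hD : FB D) (hD0 : ∀ d ∈ D, (0:ℝ) ≤ d) :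
    FB {s | ∃ b ∈ B, ∃ k, ∃ d ∈ iterSum D k, s = b + d} := by
  intro C
  have h1 : {b ∈ B | b < C}.Finite := hB C
  have h2 : {s ∈ ⋃ k, iterSum D k | s < C - b0}.Finite := iterSum_fb hD hD0 (C - b0)
  apply (Set.Finite.image2 (· + ·) h1 h2).subset
  rintro s ⟨hs, hsC⟩
  obtain ⟨b, hb, k, d, hd, rfl⟩ := hs
  have hd0 : 0 ≤ d := iterSum_nonneg hD0 k d hd
  have hbb : b0 ≤ b := hBb b hb
  exact Set.mem_image2.2 ⟨b, ⟨hb, by linarith⟩, d, ⟨Set.mem_iUnion.2 ⟨k, hd⟩, by linarith⟩, rfl⟩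
/-! ### matrix-vector algebra over the Novikov subring -/

variable {n m : ℕ}

lemma coe_mulVec (A : Matrix (Fin n) (Fin m) (NovikovSubring K G))
    (x : Fin m → NovikovSubring K G) (i : Fin n) :
    ((A.mulVec x i : NovikovSubring K G) : HahnSeries ℝ K)
      = ∑ j, (A i j : HahnSeries ℝ K) * (x j : HahnSeries ℝ K) := by
  show ((NovikovSubring K G).subtype (A.mulVec x i)) = _
  rw [Matrix.mulVec, dotProduct, map_sum]
  exact Finset.sum_congr rfl fun j _ => rfl

lemma mulVec_mul_left (A : Matrix (Fin n) (Fin m) (NovikovSubring K G))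
    (x : Fin m → NovikovSubring K G) (e : NovikovSubring K G) (i : Fin n) :
    A.mulVec (fun j => e * x j) i = e * A.mulVec x i := by
  simp only [Matrix.mulVec, dotProduct, Finset.mul_sum]
  exact Finset.sum_congr rfl fun j _ => by ring

lemma mulVec_sum {ι : Type*} (A : Matrix (Fin n) (Fin m) (NovikovSubring K G))
    (S : Finset ι) (f : ι → (Fin m → NovikovSubring K G)) (i : Fin n) :
    A.mulVec (∑ c ∈ S, f c) i = ∑ c ∈ S, A.mulVec (f c) i := by
  classical
  induction S using Finset.induction with
  | empty => simp [Matrix.mulVec_zero]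
  | insert c S hc ih =>
    rw [Finset.sum_insert hc, Matrix.mulVec_add, Finset.sum_insert hc, Pi.add_apply, ih]

/-! ### the level (shifted minimal exponent) of a vector -/

variable (t : Fin n → ℝ)

def nzFinset (v : Fin n → NovikovSubring K G) : Finset (Fin n) :=
  Finset.univ.filter fun i => v i ≠ 0

lemma ne_zero_vec_iff {v : Fin n → NovikovSubring K G} : v ≠ 0 ↔ ∃ i, v i ≠ 0 := by
  rw [Function.ne_iff]; rfl

/-- The level `min_i (ν(v_i) - t_i)` of a nonzero vector (0 for the zero vector). -/
def lev (v : Fin n → NovikovSubring K G) : ℝ :=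
  if h : (nzFinset v).Nonempty then
    ((nzFinset v).image fun i => (v i : HahnSeries ℝ K).order - t i).min' (h.image _)
  else 0

lemma lev_le {v : Fin n → NovikovSubring K G} {i : Fin n} (hi : v i ≠ 0) :
    lev t v ≤ (v i : HahnSeries ℝ K).order - t i := by
  have hmem : i ∈ nzFinset v := by simp [nzFinset, hi]
  have hne : (nzFinset v).Nonempty := ⟨i, hmem⟩
  rw [lev, dif_pos hne]
  exact Finset.min'_le _ _ (Finset.mem_image_of_mem _ hmem)

lemma lev_attain {v : Fin n → NovikovSubring K G} (hv : v ≠ 0) :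
    ∃ i, v i ≠ 0 ∧ (v i : HahnSeries ℝ K).order - t i = lev t v := by
  obtain ⟨i0, hi0⟩ := ne_zero_vec_iff.1 hv
  have hne : (nzFinset v).Nonempty := ⟨i0, by simp [nzFinset, hi0]⟩
  rw [lev, dif_pos hne]
  have := Finset.min'_mem ((nzFinset v).image fun i => (v i : HahnSeries ℝ K).order - t i)
    (hne.image _)
  rw [Finset.mem_image] at this
  obtain ⟨i, hi, hieq⟩ := this
  rw [nzFinset, Finset.mem_filter] at hi
  exact ⟨i, hi.2, hieq⟩

lemma lev_coeff_zero {v : Fin n → NovikovSubring K G} :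
    ∀ i s, s < lev t v + t i → (v i : HahnSeries ℝ K).coeff s = 0 := by
  intro i s hs
  by_cases hvi : v i = 0
  · rw [hvi]; simp
  · apply HahnSeries.coeff_eq_zero_of_lt_order
    have := lev_le t hvi
    linarith

lemma lev_coeff_ne_zero {v : Fin n → NovikovSubring K G} (hv : v ≠ 0) :
    ∃ i, (v i : HahnSeries ℝ K).coeff (lev t v + t i) ≠ 0 ∧ lev t v + t i ∈ G := by
  obtain ⟨i, hi, hieq⟩ := lev_attain t hv
  have hco : (v i : HahnSeries ℝ K) ≠ 0 := fun h => hi (coe_eq_zero.1 h)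
  have horder : lev t v + t i = (v i : HahnSeries ℝ K).order := by linarith [hieq]
  refine ⟨i, ?_, ?_⟩
  · rw [horder]; exact mt HahnSeries.coeff_order_eq_zero.1 hco
  · rw [horder]
    exact supp_sub_G (v i) (mt HahnSeries.coeff_order_eq_zero.1 hco)

lemma lev_lt {v : Fin n → NovikovSubring K G} (hv : v ≠ 0) {ρ : ℝ}
    (h1 : ∀ i s, s < ρ + t i → (v i : HahnSeries ℝ K).coeff s = 0)
    (h2 : ∀ i, (v i : HahnSeries ℝ K).coeff (ρ + t i) = 0) : ρ < lev t v := by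
  obtain ⟨i, hne, -⟩ := lev_coeff_ne_zero t hv
  by_contra hle
  push_neg at hle
  rcases eq_or_lt_of_le hle with heq | hlt
  · exact hne (heq ▸ h2 i)
  · exact hne (h1 i _ (by linarith))
/-! ### leading coefficient modules -/

lemma coe_sum {ι : Type*} (S : Finset ι) (f : ι → NovikovSubring K G) :
    ((∑ c ∈ S, f c : NovikovSubring K G) : HahnSeries ℝ K) = ∑ c ∈ S, (f c : HahnSeries ℝ K) :=
  map_sum (NovikovSubring K G).subtype f S

section withA

variable (A : Matrix (Fin n) (Fin m) (NovikovSubring K G)) (t : Fin n → ℝ)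

/-- vanishing of all (shifted) coefficients below level `r`. -/
def GeT (v : Fin n → NovikovSubring K G) (r : ℝ) : Prop :=
  ∀ i s, s < r + t i → (v i : HahnSeries ℝ K).coeff s = 0

/-- the vector of (shifted) coefficients at level `r`. -/
def tco (v : Fin n → NovikovSubring K G) (r : ℝ) : Fin n → K :=
  fun i => (v i : HahnSeries ℝ K).coeff (r + t i)

/-- achievable leading coefficient vectors at base level `-t i₀`. -/
def ModSet (i₀ : Fin n) : Set (Fin n → K) :=
  {c | ∃ xx : Fin m → NovikovSubring K G,
    GeT t (A.mulVec xx) (-(t i₀)) ∧ tco t (A.mulVec xx) (-(t i₀)) = c}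

def Mod (i₀ : Fin n) : Submodule K (Fin n → K) where
  carrier := ModSet A t i₀
  zero_mem' := by
    refine ⟨0, ?_, ?_⟩
    · intro i s _
      rw [Matrix.mulVec_zero]
      simp
    · funext i
      rw [Matrix.mulVec_zero]
      simp [tco]
  add_mem' := by
    rintro c c' ⟨xx, h1, h2⟩ ⟨yy, g1, g2⟩
    refine ⟨xx + yy, ?_, ?_⟩
    · intro i s hs
      rw [Matrix.mulVec_add]
      show (((A.mulVec xx i + A.mulVec yy i) : NovikovSubring K G) : HahnSeries ℝ K).coeff s = 0
      push_cast
      rw [HahnSeries.coeff_add, h1 i s hs, g1 i s hs, add_zero]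
    · funext i
      show (((A.mulVec (xx + yy)) i : NovikovSubring K G) : HahnSeries ℝ K).coeff _ = _
      rw [Matrix.mulVec_add]
      show (((A.mulVec xx i + A.mulVec yy i) : NovikovSubring K G) : HahnSeries ℝ K).coeff _ = _
      push_cast
      rw [HahnSeries.coeff_add]
      have h2' := congrFun h2 i
      have g2' := congrFun g2 i
      rw [tco] at h2' g2'
      rw [h2', g2']
      rfl
  smul_mem' := by
    rintro κ c ⟨xx, h1, h2⟩
    refine ⟨fun j => Ck κ * xx j, ?_, ?_⟩
    · intro i s hs
      rw [mulVec_mul_left, Ck_mul_coeff, h1 i s hs, mul_zero]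
    · funext i
      show (((A.mulVec fun j => Ck κ * xx j) i : NovikovSubring K G) : HahnSeries ℝ K).coeff _ = _
      rw [mulVec_mul_left, Ck_mul_coeff]
      have h2' := congrFun h2 i
      rw [tco] at h2'
      rw [h2']
      simp

lemma mem_Mod {i₀ : Fin n} {c : Fin n → K} : c ∈ Mod A t i₀ ↔ c ∈ ModSet A t i₀ := Iff.rfl

variable [IsNoetherianRing K]

/-- a finite generating set for `Mod A t i₀`. -/
def gens (i₀ : Fin n) : Finset (Fin n → K) :=
  (IsNoetherian.noetherian (Mod A t i₀)).choose

lemma gens_span (i₀ : Fin n) :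
    Submodule.span K (↑(gens A t i₀) : Set (Fin n → K)) = Mod A t i₀ :=
  (IsNoetherian.noetherian (Mod A t i₀)).choose_spec

lemma gens_mem {i₀ : Fin n} {c : Fin n → K} (hc : c ∈ gens A t i₀) : c ∈ ModSet A t i₀ := by
  rw [← mem_Mod A t, ← gens_span A t i₀]
  exact Submodule.subset_span hc

/-- chosen preimage witnesses for elements of `ModSet`. -/
def xw (i₀ : Fin n) (c : Fin n → K) : Fin m → NovikovSubring K G :=
  if h : c ∈ ModSet A t i₀ then h.choose else 0

lemma xw_spec {i₀ : Fin n} {c : Fin n → K} (h : c ∈ ModSet A t i₀) :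
    GeT t (A.mulVec (xw A t i₀ c)) (-(t i₀)) ∧ tco t (A.mulVec (xw A t i₀ c)) (-(t i₀)) = c := by
  rw [xw, dif_pos h]
  exact h.choose_spec

/-- the uniform norm-loss constant. -/
def gammaF : Finset ℝ :=
  Finset.univ.biUnion fun i₀ : Fin n => (gens A t i₀).biUnion fun c =>
    Finset.univ.image fun j : Fin m => -(t i₀) - lbd ((xw A t i₀ c j : HahnSeries ℝ K))

def gamma : ℝ := max 0 ((gammaF A t).max.unbotD 0)

lemma gamma_nonneg : 0 ≤ gamma A t := le_max_left _ _

lemma gamma_spec {i₀ : Fin n} {c : Fin n → K} (hc : c ∈ gens A t i₀) (j : Fin m) {s : ℝ}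
    (hs : s < -(t i₀) - gamma A t) : ((xw A t i₀ c j : NovikovSubring K G) : HahnSeries ℝ K).coeff s = 0 := by
  apply lbd_spec
  have hmem : -(t i₀) - lbd ((xw A t i₀ c j : HahnSeries ℝ K)) ∈ gammaF A t := by
    rw [gammaF, Finset.mem_biUnion]
    exact ⟨i₀, Finset.mem_univ _, Finset.mem_biUnion.2 ⟨c, hc,
      Finset.mem_image.2 ⟨j, Finset.mem_univ _, rfl⟩⟩⟩
  have h1 := le_max_unbot' hmem
  have h2 : -(t i₀) - lbd ((xw A t i₀ c j : HahnSeries ℝ K)) ≤ gamma A t :=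
    le_trans h1 (le_max_right _ _)
  linarith

/-- the set of level shifts produced by corrections. -/
def Dset : Set ℝ :=
  {d | ∃ i₀, ∃ c ∈ gens A t i₀, ∃ i,
    ((A.mulVec (xw A t i₀ c) i : NovikovSubring K G) : HahnSeries ℝ K).coeff (d - t i₀ + t i) ≠ 0}

lemma Dset_nonneg : ∀ d ∈ Dset A t, (0:ℝ) ≤ d := by
  rintro d ⟨i₀, c, hc, i, hne⟩
  by_contra h
  push_neg at h
  exact hne ((xw_spec A t (gens_mem A t hc)).1 i _ (by linarith))

lemma Dset_FB : FB (Dset A t) := by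
  intro C
  have hsub : {d ∈ Dset A t | d < C} ⊆ ⋃ i₀ : Fin n, ⋃ c ∈ gens A t i₀, ⋃ i : Fin n,
      (fun u => u + t i₀ - t i) ''
        {u ∈ ((A.mulVec (xw A t i₀ c) i : NovikovSubring K G) : HahnSeries ℝ K).support |
          u < C - t i₀ + t i} := by
    rintro d ⟨⟨i₀, c, hc, i, hne⟩, hdC⟩
    apply Set.mem_iUnion.2 ⟨i₀, _⟩
    apply Set.mem_biUnion hc
    apply Set.mem_iUnion.2 ⟨i, _⟩
    exact ⟨d - t i₀ + t i, ⟨hne, by linarith⟩, by ring⟩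
  apply Set.Finite.subset ?_ hsub
  apply Set.finite_iUnion
  intro i₀
  apply Set.Finite.biUnion (gens A t i₀).finite_toSet
  intro c _
  apply Set.finite_iUnion
  intro i
  apply Set.Finite.image
  exact FB_support _ _

/-- shifting achievable leading vectors into the base-point module. -/
lemma modset_shift {r : ℝ} {i₀ : Fin n} (hg : r + t i₀ ∈ G) {c : Fin n → K}
    (h : ∃ xx : Fin m → NovikovSubring K G,
      GeT t (A.mulVec xx) r ∧ tco t (A.mulVec xx) r = c) :
    c ∈ ModSet A t i₀ := by
  obtain ⟨xx, h1, h2⟩ := h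
  refine ⟨fun j => Tg (-(r + t i₀)) (G.neg_mem hg) * xx j, ?_, ?_⟩
  · intro i s hs
    rw [mulVec_mul_left, Tg_mul_coeff]
    exact h1 i _ (by linarith)
  · funext i
    show (((A.mulVec fun j => Tg (-(r + t i₀)) (G.neg_mem hg) * xx j) i :
      NovikovSubring K G) : HahnSeries ℝ K).coeff _ = _
    rw [mulVec_mul_left, Tg_mul_coeff]
    have h2' := congrFun h2 i
    rw [tco] at h2'
    rw [show -(t i₀) + t i - -(r + t i₀) = r + t i by ring]
    exact h2'

lemma coeff_sum {ι : Type*} (S : Finset ι) (f : ι → HahnSeries ℝ K) (g : ℝ) :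
    (∑ c ∈ S, f c).coeff g = ∑ c ∈ S, (f c).coeff g :=
  map_sum (HahnSeries.coeff.addMonoidHom g) f S

/-- the cancellation step: any achievable leading vector at level `r` can be cancelled
with uniformly controlled corrections. -/
lemma cancel {r : ℝ} {i₀ : Fin n} (hg : r + t i₀ ∈ G) {c : Fin n → K}
    (hc : c ∈ ModSet A t i₀) :
    ∃ u : Fin m → NovikovSubring K G,
      GeT t (A.mulVec u) r ∧
      tco t (A.mulVec u) r = c ∧
      (∀ j s, s < r - gamma A t → ((u j : NovikovSubring K G) : HahnSeries ℝ K).coeff s = 0) ∧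
      (∀ i s, ((A.mulVec u i : NovikovSubring K G) : HahnSeries ℝ K).coeff s ≠ 0 →
        s - t i - r ∈ Dset A t) := by
  have hc' : c ∈ Submodule.span K (↑(gens A t i₀) : Set (Fin n → K)) := by
    rw [gens_span A t i₀]; exact hc
  obtain ⟨f, -, hf⟩ := Submodule.mem_span_finset.1 hc'
  set u : Fin m → NovikovSubring K G :=
    fun j => Tg (r + t i₀) hg * (∑ c' ∈ gens A t i₀, Ck (f c') * xw A t i₀ c' j) with hu
  have keyu : ∀ j s, ((u j : NovikovSubring K G) : HahnSeries ℝ K).coeff s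
      = ∑ c' ∈ gens A t i₀, f c' *
        ((xw A t i₀ c' j : NovikovSubring K G) : HahnSeries ℝ K).coeff (s - (r + t i₀)) := by
    intro j s
    rw [hu]
    rw [Tg_mul_coeff, coe_sum, coeff_sum]
    exact Finset.sum_congr rfl fun c' _ => Ck_mul_coeff _ _ _
  have keyA : ∀ i s, ((A.mulVec u i : NovikovSubring K G) : HahnSeries ℝ K).coeff s
      = ∑ c' ∈ gens A t i₀, f c' *
        ((A.mulVec (xw A t i₀ c') i : NovikovSubring K G) : HahnSeries ℝ K).coeff
          (s - (r + t i₀)) := by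
    intro i s
    have hmv : A.mulVec u i = Tg (r + t i₀) hg *
        ∑ c' ∈ gens A t i₀, Ck (f c') * A.mulVec (xw A t i₀ c') i := by
      rw [hu]
      rw [mulVec_mul_left]
      congr 1
      rw [show (fun j => ∑ c' ∈ gens A t i₀, Ck (f c') * xw A t i₀ c' j)
          = ∑ c' ∈ gens A t i₀, (fun j => Ck (f c') * xw A t i₀ c' j) from ?_]
      · rw [mulVec_sum]
        exact Finset.sum_congr rfl fun c' _ => mulVec_mul_left A _ _ i
      · funext j
        simp
    rw [hmv, Tg_mul_coeff, coe_sum, coeff_sum]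
    exact Finset.sum_congr rfl fun c' _ => Ck_mul_coeff _ _ _
  refine ⟨u, ?_, ?_, ?_, ?_⟩
  · intro i s hs
    rw [keyA i s]
    apply Finset.sum_eq_zero
    intro c' hcg
    rw [(xw_spec A t (gens_mem A t hcg)).1 i _ (by linarith), mul_zero]
  · funext i
    show ((A.mulVec u i : NovikovSubring K G) : HahnSeries ℝ K).coeff (r + t i) = c i
    rw [keyA]
    have : ∀ c' ∈ gens A t i₀, f c' *
        ((A.mulVec (xw A t i₀ c') i : NovikovSubring K G) : HahnSeries ℝ K).coeff
          (r + t i - (r + t i₀)) = f c' * c' i := by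
      intro c' hcg
      congr 1
      have := congrFun (xw_spec A t (gens_mem A t hcg)).2 i
      rw [tco] at this
      rw [show r + t i - (r + t i₀) = -(t i₀) + t i by ring]
      exact this
    rw [Finset.sum_congr rfl this, ← hf]
    rw [Finset.sum_apply]
    exact Finset.sum_congr rfl fun c' _ => rfl
  · intro j s hs
    rw [keyu j s]
    apply Finset.sum_eq_zero
    intro c' hcg
    rw [gamma_spec A t hcg j (by linarith : s - (r + t i₀) < -(t i₀) - gamma A t), mul_zero]
  · intro i s hs
    rw [keyA i s] at hs
    obtain ⟨c', hcg, hne⟩ := Finset.exists_ne_zero_of_sum_ne_zero hs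
    refine ⟨i₀, c', hcg, i, ?_⟩
    intro h0
    apply hne
    rw [show s - t i - r - t i₀ + t i = s - (r + t i₀) from by ring] at h0
    rw [h0, mul_zero]

end withA
/-! ### the greedy cancellation process -/

section process

variable [IsNoetherianRing K]
variable (A : Matrix (Fin n) (Fin m) (NovikovSubring K G)) (t : Fin n → ℝ)
variable (w : Fin n → NovikovSubring K G)

def resid (x : Fin m → NovikovSubring K G) : Fin n → NovikovSubring K G := w - A.mulVec x

lemma resid_coeff (x : Fin m → NovikovSubring K G) (i : Fin n) (s : ℝ) :
    ((resid A w x i : NovikovSubring K G) : HahnSeries ℝ K).coeff s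
      = ((w i : NovikovSubring K G) : HahnSeries ℝ K).coeff s
        - ((A.mulVec x i : NovikovSubring K G) : HahnSeries ℝ K).coeff s := by
  rw [resid, Pi.sub_apply]
  push_cast
  rw [HahnSeries.coeff_sub]

lemma resid_add (x u : Fin m → NovikovSubring K G) :
    resid A w (x + u) = resid A w x - A.mulVec u := by
  rw [resid, resid, Matrix.mulVec_add]
  abel

/-- the process is alive at `x` when the residue is nonzero and its leading
coefficient vector is achievable. -/
def Alive (x : Fin m → NovikovSubring K G) : Prop :=
  resid A w x ≠ 0 ∧ ∀ i₀ : Fin n, lev t (resid A w x) + t i₀ ∈ G →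
    tco t (resid A w x) (lev t (resid A w x)) ∈ ModSet A t i₀

lemma step_exists {x : Fin m → NovikovSubring K G} (h : Alive A t w x) :
    ∃ u : Fin m → NovikovSubring K G,
      GeT t (A.mulVec u) (lev t (resid A w x)) ∧
      tco t (A.mulVec u) (lev t (resid A w x)) = tco t (resid A w x) (lev t (resid A w x)) ∧
      (∀ j s, s < lev t (resid A w x) - gamma A t →
        ((u j : NovikovSubring K G) : HahnSeries ℝ K).coeff s = 0) ∧
      (∀ i s, ((A.mulVec u i : NovikovSubring K G) : HahnSeries ℝ K).coeff s ≠ 0 →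
        s - t i - lev t (resid A w x) ∈ Dset A t) := by
  obtain ⟨i₀, _, hG⟩ := lev_coeff_ne_zero t h.1
  exact cancel A t hG (h.2 i₀ hG)

def stepf (x : Fin m → NovikovSubring K G) : Fin m → NovikovSubring K G :=
  if h : Alive A t w x then x + (step_exists A t w h).choose else x

def xs (k : ℕ) : Fin m → NovikovSubring K G := (stepf A t w)^[k] 0

lemma xs_zero : xs A t w 0 = 0 := rfl

lemma xs_succ (k : ℕ) : xs A t w (k+1) = stepf A t w (xs A t w k) :=
  Function.iterate_succ_apply' _ _ _

/-- the current level of the process. -/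
def rk (k : ℕ) : ℝ := lev t (resid A w (xs A t w k))

/-- the increment at step `k`. -/
def uk (k : ℕ) : Fin m → NovikovSubring K G := xs A t w (k+1) - xs A t w k

lemma uk_eq {k : ℕ} (h : Alive A t w (xs A t w k)) :
    uk A t w k = (step_exists A t w h).choose := by
  rw [uk, xs_succ, stepf, dif_pos h]
  abel

lemma xs_add_uk (k : ℕ) : xs A t w (k+1) = xs A t w k + uk A t w k := by
  rw [uk]; abel

lemma rk_def (k : ℕ) : rk A t w k = lev t (resid A w (xs A t w k)) := rfl

/-- one-step properties. -/
lemma step_props {k : ℕ} (h : Alive A t w (xs A t w k)) :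
    (∀ i s, s < rk A t w k + t i →
      ((resid A w (xs A t w (k+1)) i : NovikovSubring K G) : HahnSeries ℝ K).coeff s = 0) ∧
    (∀ i, ((resid A w (xs A t w (k+1)) i : NovikovSubring K G) : HahnSeries ℝ K).coeff
      (rk A t w k + t i) = 0) ∧
    (∀ j s, s < rk A t w k - gamma A t →
      ((uk A t w k j : NovikovSubring K G) : HahnSeries ℝ K).coeff s = 0) ∧
    (∀ i s, ((resid A w (xs A t w (k+1)) i : NovikovSubring K G) : HahnSeries ℝ K).coeff s ≠ 0 →
      ((resid A w (xs A t w k) i : NovikovSubring K G) : HahnSeries ℝ K).coeff s ≠ 0 ∨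
        s - t i - rk A t w k ∈ Dset A t) := by
  have hu := uk_eq A t w h
  obtain ⟨hGe, htco, hbd, hsupp⟩ := (step_exists A t w h).choose_spec
  rw [← hu] at hGe htco hbd hsupp
  have hres : resid A w (xs A t w (k+1)) = resid A w (xs A t w k) - A.mulVec (uk A t w k) := by
    rw [xs_add_uk, resid_add]
  have hcoeff : ∀ i s, ((resid A w (xs A t w (k+1)) i : NovikovSubring K G) :
      HahnSeries ℝ K).coeff s
      = ((resid A w (xs A t w k) i : NovikovSubring K G) : HahnSeries ℝ K).coeff s
        - ((A.mulVec (uk A t w k) i : NovikovSubring K G) : HahnSeries ℝ K).coeff s := by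
    intro i s
    rw [hres, Pi.sub_apply]
    push_cast
    rw [HahnSeries.coeff_sub]
  refine ⟨?_, ?_, hbd, ?_⟩
  · intro i s hs
    rw [hcoeff, lev_coeff_zero t i s hs, hGe i s hs, sub_zero]
  · intro i
    rw [hcoeff]
    have h1 := congrFun htco i
    rw [tco, tco] at h1
    rw [rk_def, h1]
    exact sub_self _
  · intro i s hs
    by_contra hcon
    push_neg at hcon
    obtain ⟨h1, h2⟩ := hcon
    apply hs
    rw [hcoeff, h1, zero_sub, neg_eq_zero]
    by_contra h3
    exact h2 (hsupp i s h3)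

/-- level strictly increases along a live step (as long as the residue stays nonzero). -/
lemma rk_lt {k : ℕ} (h : Alive A t w (xs A t w k)) (h2 : resid A w (xs A t w (k+1)) ≠ 0) :
    rk A t w k < rk A t w (k+1) := by
  obtain ⟨p1, p2, -, -⟩ := step_props A t w h
  exact lev_lt t h2 p1 p2

/-- the base set: the shifted support of `w`. -/
def Bw : Set ℝ := {v | ∃ i, ((w i : NovikovSubring K G) : HahnSeries ℝ K).coeff (v + t i) ≠ 0}

/-- the support invariant of the process. -/
lemma supp_inv (k : ℕ) (hAl : ∀ l, l < k → Alive A t w (xs A t w l)) :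
    ∀ i s, ((resid A w (xs A t w k) i : NovikovSubring K G) : HahnSeries ℝ K).coeff s ≠ 0 →
      ∃ b ∈ Bw t w, ∃ d ∈ iterSum (Dset A t) k, s - t i = b + d := by
  induction k with
  | zero =>
    intro i s hs
    refine ⟨s - t i, ?_, 0, Set.mem_singleton 0, by ring⟩
    rw [Bw]
    refine ⟨i, ?_⟩
    rw [show s - t i + t i = s by ring]
    have : resid A w (xs A t w 0) = w := by
      rw [xs_zero, resid, Matrix.mulVec_zero, sub_zero]
    rw [this] at hs
    exact hs
  | succ k ih =>
    intro i s hs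
    have hAk : Alive A t w (xs A t w k) := hAl k (Nat.lt_succ_of_le (le_refl k))
    have ih' := ih (fun l hl => hAl l (Nat.lt_succ_of_lt hl))
    obtain ⟨-, -, -, p4⟩ := step_props A t w hAk
    rcases p4 i s hs with hprev | hD
    · obtain ⟨b, hb, d, hd, heq⟩ := ih' i s hprev
      exact ⟨b, hb, d, iterSum_mono_succ k hd, heq⟩
    · -- the level rk k itself satisfies the invariant
      obtain ⟨i', hne', -⟩ := lev_coeff_ne_zero t hAk.1
      obtain ⟨b, hb, d, hd, heq⟩ := ih' i' (rk A t w k + t i') hne'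
      refine ⟨b, hb, d + (s - t i - rk A t w k), ⟨d, hd, _, Set.mem_insert_of_mem _ hD, rfl⟩, ?_⟩
      have hrk : rk A t w k = b + d := by
        rw [← heq]; ring
      rw [hrk]
      ring

/-- coefficient bound for the approximations. -/
lemma xs_coeff_bound (k : ℕ) (j : Fin m) (s : ℝ)
    (hs : ∀ l, l < k → s < rk A t w l - gamma A t) :
    ((xs A t w k j : NovikovSubring K G) : HahnSeries ℝ K).coeff s = 0 := by
  induction k with
  | zero => rw [xs_zero]; simp
  | succ k ih =>
    rw [xs_add_uk, Pi.add_apply]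
    push_cast
    rw [HahnSeries.coeff_add]
    rw [ih (fun l hl => hs l (Nat.lt_succ_of_lt hl)), zero_add]
    by_cases hA : Alive A t w (xs A t w k)
    · exact (step_props A t w hA).2.2.1 j s (hs k (Nat.lt_succ_of_le (le_refl k)))
    · have : uk A t w k = 0 := by
        rw [uk, xs_succ, stepf, dif_neg hA]
        abel
      rw [this]
      simp

end process
/-! ### bridging to the EReal-valued valuations -/

lemma min_untop'_le {T : Finset ℝ} {a : ℝ} (h : a ∈ T) : T.min.untopD 0 ≤ a := by
  rcases hT : T.min with _ | b
  · exact absurd (Finset.min_eq_top.1 hT ▸ h) (Finset.notMem_empty a)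
  · have := Finset.min_le h
    rw [hT, show (some b : WithTop ℝ) = (b : WithTop ℝ) from rfl] at this
    have hb : b ≤ a := by exact_mod_cast this
    exact hb

section bridge

variable (t : Fin n → ℝ)

lemma nubart_ge {v : Fin n → NovikovSubring K G} {r : ℝ}
    (h : ∀ i s, s < r + t i → ((v i : NovikovSubring K G) : HahnSeries ℝ K).coeff s = 0) :
    (r : EReal) ≤ nubartS t v := by
  rw [nubartS, nubartH]
  apply le_iInf
  intro i
  by_cases hv : ((v i : NovikovSubring K G) : HahnSeries ℝ K) = 0
  · rw [nuH, if_pos hv, EReal.top_sub_coe]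
    exact le_top
  · rw [nuH, if_neg hv]
    have horder : r + t i ≤ ((v i : NovikovSubring K G) : HahnSeries ℝ K).order := by
      by_contra hlt
      push_neg at hlt
      exact (mt HahnSeries.coeff_order_eq_zero.1 hv) (h i _ hlt)
    rw [← EReal.coe_sub]
    exact_mod_cast (by linarith :
      r ≤ ((v i : NovikovSubring K G) : HahnSeries ℝ K).order - t i)

lemma nubart_le {v : Fin n → NovikovSubring K G} {r : ℝ} {i : Fin n}
    (h : ((v i : NovikovSubring K G) : HahnSeries ℝ K).coeff (r + t i) ≠ 0) :
    nubartS t v ≤ (r : EReal) := by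
  rw [nubartS, nubartH]
  apply iInf_le_of_le i
  have hv : ((v i : NovikovSubring K G) : HahnSeries ℝ K) ≠ 0 := by
    intro h0; rw [h0] at h; simp at h
  rw [nuH, if_neg hv, ← EReal.coe_sub]
  have := HahnSeries.order_le_of_coeff_ne_zero h
  exact_mod_cast (by linarith :
    ((v i : NovikovSubring K G) : HahnSeries ℝ K).order - t i ≤ r)

lemma nubart_top {v : Fin n → NovikovSubring K G} (h : v = 0) : nubartS t v = ⊤ := by
  rw [nubartS, nubartH]
  rw [iInf_eq_top]
  intro i
  rw [h]
  show nuH ((0 : NovikovSubring K G) : HahnSeries ℝ K) - _ = ⊤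
  rw [ZeroMemClass.coe_zero, nuH, if_pos rfl, EReal.top_sub_coe]

lemma nubar_ge {x : Fin m → NovikovSubring K G} {r : ℝ}
    (h : ∀ j s, s < r → ((x j : NovikovSubring K G) : HahnSeries ℝ K).coeff s = 0) :
    (r : EReal) ≤ nubarS x := by
  rw [nubarS, nubarH]
  apply le_iInf
  intro j
  by_cases hv : ((x j : NovikovSubring K G) : HahnSeries ℝ K) = 0
  · rw [nuH, if_pos hv]; exact le_top
  · rw [nuH, if_neg hv]
    have : r ≤ ((x j : NovikovSubring K G) : HahnSeries ℝ K).order := by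
      by_contra hlt
      push_neg at hlt
      exact (mt HahnSeries.coeff_order_eq_zero.1 hv) (h j _ hlt)
    exact_mod_cast this

lemma nubart_gt_imp {v : Fin n → NovikovSubring K G} {r : ℝ}
    (h : (r : EReal) < nubartS t v) :
    ∀ i s, s ≤ r + t i → ((v i : NovikovSubring K G) : HahnSeries ℝ K).coeff s = 0 := by
  intro i s hs
  rw [nubartS, nubartH] at h
  have hi : (r : EReal) < nuH ((v i : NovikovSubring K G) : HahnSeries ℝ K) - (t i : EReal) :=
    lt_of_lt_of_le h (iInf_le _ i)
  by_cases hv : ((v i : NovikovSubring K G) : HahnSeries ℝ K) = 0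
  · rw [hv]; simp
  · rw [nuH, if_neg hv, ← EReal.coe_sub] at hi
    have : r < ((v i : NovikovSubring K G) : HahnSeries ℝ K).order - t i := by
      exact_mod_cast hi
    exact HahnSeries.coeff_eq_zero_of_lt_order (by linarith)

end bridge
/-! ### endgame helpers -/

lemma nubar_top : nubarS (0 : Fin m → NovikovSubring K G) = ⊤ := by
  rw [nubarS, nubarH, iInf_eq_top]
  intro j
  show nuH ((0 : NovikovSubring K G) : HahnSeries ℝ K) = ⊤
  rw [ZeroMemClass.coe_zero, nuH, if_pos rfl]

section endgame

variable [IsNoetherianRing K]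
variable (A : Matrix (Fin n) (Fin m) (NovikovSubring K G)) (t : Fin n → ℝ)
variable (w : Fin n → NovikovSubring K G)

lemma resid_xs_zero : resid A w (xs A t w 0) = w := by
  rw [xs_zero, resid, Matrix.mulVec_zero, sub_zero]

lemma rk_ge_r0 {k l : ℕ} (hAl : ∀ l', l' < k → Alive A t w (xs A t w l')) (hl : l < k) :
    rk A t w 0 ≤ rk A t w l := by
  induction l with
  | zero => exact le_refl _
  | succ l ih =>
    have h1 : l < k := Nat.lt_of_succ_lt hl
    have h2 := rk_lt A t w (hAl l h1) (hAl (l+1) hl).1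
    exact le_of_lt (lt_of_le_of_lt (ih h1) h2)

lemma xs_eq_sum (k : ℕ) : xs A t w k = ∑ l ∈ Finset.range k, uk A t w l := by
  induction k with
  | zero => rw [xs_zero, Finset.range_zero, Finset.sum_empty]
  | succ k ih =>
    rw [Finset.range_add_one, Finset.sum_insert Finset.notMem_range_self, xs_add_uk, ih]
    abel

lemma FB_Bw : FB (Bw t w) := by
  intro C
  have hsub : {v ∈ Bw t w | v < C} ⊆ ⋃ i : Fin n,
      (fun u => u - t i) '' {u ∈ ((w i : NovikovSubring K G) : HahnSeries ℝ K).support |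
        u < C + t i} := by
    rintro v ⟨⟨i, hne⟩, hvC⟩
    apply Set.mem_iUnion.2 ⟨i, _⟩
    exact ⟨v + t i, ⟨hne, by linarith⟩, by ring⟩
  apply Set.Finite.subset ?_ hsub
  apply Set.finite_iUnion
  intro i
  exact Set.Finite.image _ (FB_support (w i) (C + t i))

lemma Bw_lower : ∃ b0 : ℝ, ∀ b ∈ Bw t w, b0 ≤ b := by
  refine ⟨((Finset.univ.image fun i : Fin n =>
    lbd ((w i : NovikovSubring K G) : HahnSeries ℝ K) - t i)).min.untopD 0, ?_⟩
  rintro b ⟨i, hne⟩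
  have h1 : lbd ((w i : NovikovSubring K G) : HahnSeries ℝ K) ≤ b + t i := by
    by_contra h
    push_neg at h
    exact hne (lbd_spec _ h)
  have hmem : lbd ((w i : NovikovSubring K G) : HahnSeries ℝ K) - t i ∈
      (Finset.univ.image fun i : Fin n =>
        lbd ((w i : NovikovSubring K G) : HahnSeries ℝ K) - t i) :=
    Finset.mem_image_of_mem _ (Finset.mem_univ i)
  have h2 := min_untop'_le hmem
  linarith

lemma exists_alpha : ∃ α : ℝ, ∀ (i : Fin n) (j : Fin m) (s : ℝ), s < α →
    ((A i j : NovikovSubring K G) : HahnSeries ℝ K).coeff s = 0 := by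
  refine ⟨((Finset.univ.image fun p : Fin n × Fin m =>
    lbd ((A p.1 p.2 : NovikovSubring K G) : HahnSeries ℝ K))).min.untopD 0, ?_⟩
  intro i j s hs
  apply lbd_spec
  have hmem : lbd ((A i j : NovikovSubring K G) : HahnSeries ℝ K) ∈
      (Finset.univ.image fun p : Fin n × Fin m =>
        lbd ((A p.1 p.2 : NovikovSubring K G) : HahnSeries ℝ K)) :=
    Finset.mem_image_of_mem _ (Finset.mem_univ (i, j))
  have h2 := min_untop'_le hmem
  linarith

lemma rk_finite_below (hAl : ∀ k, Alive A t w (xs A t w k)) :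
    ∀ C : ℝ, {k : ℕ | rk A t w k < C}.Finite := by
  obtain ⟨b0, hb0⟩ := Bw_lower t w
  have hFB : FB {s | ∃ b ∈ Bw t w, ∃ kk, ∃ d ∈ iterSum (Dset A t) kk, s = b + d} :=
    FB_add_iterSum (FB_Bw t w) hb0 (Dset_FB A t) (Dset_nonneg A t)
  intro C
  have hmem : ∀ k, rk A t w k ∈
      {s | ∃ b ∈ Bw t w, ∃ kk, ∃ d ∈ iterSum (Dset A t) kk, s = b + d} := by
    intro k
    obtain ⟨i', hne', -⟩ := lev_coeff_ne_zero t (hAl k).1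
    obtain ⟨b, hb, d, hd, heq⟩ := supp_inv A t w k (fun l _ => hAl l) i' _ hne'
    rw [← rk_def A t w k] at heq
    exact ⟨b, hb, k, d, hd, by linarith [heq]⟩
  have hstrict : StrictMono (rk A t w) :=
    strictMono_nat_of_lt_succ (fun k => rk_lt A t w (hAl k) (hAl (k+1)).1)
  have hsub : {k : ℕ | rk A t w k < C} ⊆ (rk A t w) ⁻¹'
      {s ∈ {s | ∃ b ∈ Bw t w, ∃ kk, ∃ d ∈ iterSum (Dset A t) kk, s = b + d} | s < C} :=
    fun k hk => ⟨hmem k, hk⟩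
  exact ((hFB C).preimage (hstrict.injective.injOn)).subset hsub

end endgame
end BA
set_option synthInstance.maxHeartbeats 1000000 in
/-- main algebraic theorem: for a matrix `A` over `Λ_K(G)` with
`K` Noetherian and any `t ∈ ℝ^n` there is `γ ∈ ℝ` such that every
`w ∈ Λ_K(G)^n` admits `x₀ ∈ Λ_K(G)^m` with `ν̄(x₀) ≥ ν̄_t(w) − γ` and
`ν̄_t(w − A x₀) = sup_x ν̄_t(w − A x)`. -/
theorem best_approximation_shifted {K : Type*} [CommRing K] [IsNoetherianRing K]
    (G : AddSubgroup ℝ) (n m : ℕ)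
    (A : Matrix (Fin n) (Fin m) (NovikovSubring K G)) (t : Fin n → ℝ) :
    ∃ γ : ℝ, ∀ w : Fin n → NovikovSubring K G,
      ∃ x₀ : Fin m → NovikovSubring K G,
        nubartS t w - (γ : EReal) ≤ nubarS x₀ ∧
        nubartS t (w - A.mulVec x₀)
          = ⨆ x : Fin m → NovikovSubring K G, nubartS t (w - A.mulVec x) := by

  classical
  refine ⟨BA.gamma A t, ?_⟩
  intro w
  by_cases hw : w = 0
  · refine ⟨0, ?_, ?_⟩
    · rw [BA.nubar_top]
      exact le_top
    · have h0 : w - A.mulVec 0 = 0 := by rw [hw, Matrix.mulVec_zero, sub_zero]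
      have hval : nubartS t (w - A.mulVec (0 : Fin m → NovikovSubring K G)) = ⊤ :=
        BA.nubart_top t h0
      rw [hval]
      exact (top_le_iff.1 (hval ▸ le_iSup (fun x => nubartS t (w - A.mulVec x)) 0)).symm
  · -- main case : w ≠ 0
    have hres0 : BA.resid A w (BA.xs A t w 0) = w := BA.resid_xs_zero A t w
    have hub : nubartS t w ≤ ((BA.rk A t w 0 : ℝ) : EReal) := by
      have hlev : BA.rk A t w 0 = BA.lev t w := by rw [BA.rk_def, hres0]
      obtain ⟨i, hco, -⟩ := BA.lev_coeff_ne_zero t hw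
      rw [← hlev] at hco
      exact BA.nubart_le t hco
    have cond1 : ∀ x₀ : Fin m → NovikovSubring K G,
        (∀ j s, s < BA.rk A t w 0 - BA.gamma A t →
          ((x₀ j : NovikovSubring K G) : HahnSeries ℝ K).coeff s = 0) →
        nubartS t w - (BA.gamma A t : EReal) ≤ nubarS x₀ := by
      intro x₀ hx₀
      calc nubartS t w - (BA.gamma A t : EReal)
          ≤ ((BA.rk A t w 0 : ℝ) : EReal) - (BA.gamma A t : EReal) :=
            EReal.sub_le_sub hub (le_refl _)
        _ = ((BA.rk A t w 0 - BA.gamma A t : ℝ) : EReal) := (EReal.coe_sub _ _).symm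
        _ ≤ nubarS x₀ := BA.nubar_ge hx₀
    by_cases hA : ∃ k, ¬ BA.Alive A t w (BA.xs A t w k)
    · -- the process dies at stage k0
      have hk0 : ¬ BA.Alive A t w (BA.xs A t w (Nat.find hA)) := Nat.find_spec hA
      have hpre : ∀ l, l < Nat.find hA → BA.Alive A t w (BA.xs A t w l) := fun l hl =>
        of_not_not (Nat.find_min hA hl)
      have hx₀bd : ∀ j s, s < BA.rk A t w 0 - BA.gamma A t →
          ((BA.xs A t w (Nat.find hA) j : NovikovSubring K G) : HahnSeries ℝ K).coeff s = 0 := by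
        intro j s hs
        apply BA.xs_coeff_bound A t w (Nat.find hA) j s
        intro l hl
        have := BA.rk_ge_r0 A t w hpre hl
        linarith
      refine ⟨BA.xs A t w (Nat.find hA), cond1 _ hx₀bd, ?_⟩
      by_cases hz : BA.resid A w (BA.xs A t w (Nat.find hA)) = 0
      · have hval : nubartS t (w - A.mulVec (BA.xs A t w (Nat.find hA))) = ⊤ :=
          BA.nubart_top t hz
        rw [hval]
        exact (top_le_iff.1 (hval ▸ le_iSup (fun x => nubartS t (w - A.mulVec x))
          (BA.xs A t w (Nat.find hA)))).symm
      · -- the residue is nonzero and its leading vector is not achievable: optimum reached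
        have hdead : ∃ i₀ : Fin n,
            (BA.lev t (BA.resid A w (BA.xs A t w (Nat.find hA))) + t i₀ ∈ G) ∧
            BA.tco t (BA.resid A w (BA.xs A t w (Nat.find hA)))
              (BA.lev t (BA.resid A w (BA.xs A t w (Nat.find hA)))) ∉ BA.ModSet A t i₀ := by
          by_contra hcon
          push_neg at hcon
          exact hk0 ⟨hz, hcon⟩
        obtain ⟨i₀, hvalid, hnot⟩ := hdead
        have hupper : ∀ x : Fin m → NovikovSubring K G,
            nubartS t (w - A.mulVec x)
              ≤ ((BA.lev t (BA.resid A w (BA.xs A t w (Nat.find hA))) : ℝ) : EReal) := by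
          intro x
          by_contra hgt
          push_neg at hgt
          have himp := BA.nubart_gt_imp t hgt
          apply hnot
          apply BA.modset_shift A t hvalid
          have hAx : A.mulVec (x - BA.xs A t w (Nat.find hA))
              = BA.resid A w (BA.xs A t w (Nat.find hA)) - (w - A.mulVec x) := by
            rw [Matrix.mulVec_sub, BA.resid]
            abel
          have hcdiff : ∀ i s,
              ((A.mulVec (x - BA.xs A t w (Nat.find hA)) i : NovikovSubring K G) :
                HahnSeries ℝ K).coeff s
              = ((BA.resid A w (BA.xs A t w (Nat.find hA)) i : NovikovSubring K G) :
                  HahnSeries ℝ K).coeff s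
                - (((w - A.mulVec x) i : NovikovSubring K G) : HahnSeries ℝ K).coeff s := by
            intro i s
            rw [hAx, Pi.sub_apply]
            push_cast
            rw [HahnSeries.coeff_sub]
          refine ⟨x - BA.xs A t w (Nat.find hA), ?_, ?_⟩
          · intro i s hs
            rw [hcdiff, BA.lev_coeff_zero t i s hs, himp i s (le_of_lt hs), sub_zero]
          · funext i
            show ((A.mulVec (x - BA.xs A t w (Nat.find hA)) i : NovikovSubring K G) :
              HahnSeries ℝ K).coeff _ = _
            rw [hcdiff, himp i _ (le_refl _), sub_zero]
            rfl
        obtain ⟨i1, hco1, -⟩ := BA.lev_coeff_ne_zero t hz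
        have hval : nubartS t (w - A.mulVec (BA.xs A t w (Nat.find hA)))
            = ((BA.lev t (BA.resid A w (BA.xs A t w (Nat.find hA))) : ℝ) : EReal) := by
          apply le_antisymm
          · exact BA.nubart_le t hco1
          · exact BA.nubart_ge t (BA.lev_coeff_zero t)
        rw [hval]
        apply le_antisymm
        · calc ((BA.lev t (BA.resid A w (BA.xs A t w (Nat.find hA))) : ℝ) : EReal)
              = nubartS t (w - A.mulVec (BA.xs A t w (Nat.find hA))) := hval.symm
            _ ≤ ⨆ x, nubartS t (w - A.mulVec x) :=
              le_iSup (fun x => nubartS t (w - A.mulVec x)) _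
        · exact iSup_le hupper
    · -- the process lives forever : exact solvability
      have hAl : ∀ k, BA.Alive A t w (BA.xs A t w k) := by
        intro k
        by_contra hc
        exact hA ⟨k, hc⟩
      have hfin := BA.rk_finite_below A t w hAl
      have hstrict : StrictMono (BA.rk A t w) :=
        strictMono_nat_of_lt_succ (fun k => BA.rk_lt A t w (hAl k) (hAl (k+1)).1)
      have hmono := hstrict.monotone
      have hbd : ∀ k j s, s < BA.rk A t w k - BA.gamma A t →
          ((BA.uk A t w k j : NovikovSubring K G) : HahnSeries ℝ K).coeff s = 0 :=
        fun k => (BA.step_props A t w (hAl k)).2.2.1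
      have hcos : ∀ (j : Fin m) (g : ℝ),
          {k : ℕ | ((BA.uk A t w k j : NovikovSubring K G) : HahnSeries ℝ K).coeff g ≠ 0}.Finite := by
        intro j g
        apply (hfin (g + BA.gamma A t + 1)).subset
        intro k hk
        simp only [Set.mem_setOf_eq] at hk ⊢
        by_contra hcon
        push_neg at hcon
        exact hk (hbd k j g (by linarith))
      have hFBu : ∀ j : Fin m,
          BA.FB (⋃ k : ℕ, ((BA.uk A t w k j : NovikovSubring K G) : HahnSeries ℝ K).support) := by
        intro j C
        apply ((hfin (C + BA.gamma A t)).biUnion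
          (fun k (_ : k ∈ {k : ℕ | BA.rk A t w k < C + BA.gamma A t}) =>
            BA.FB_support (BA.uk A t w k j) C)).subset
        rintro s ⟨hs, hsC⟩
        obtain ⟨_, ⟨k, rfl⟩, hks⟩ := hs
        refine Set.mem_biUnion ?_ ⟨hks, hsC⟩
        show BA.rk A t w k < C + BA.gamma A t
        by_contra hcon
        push_neg at hcon
        exact hks (hbd k j s (by linarith))
      set fam : Fin m → HahnSeries.SummableFamily ℝ K ℕ := fun j =>
        ⟨fun k => ((BA.uk A t w k j : NovikovSubring K G) : HahnSeries ℝ K),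
          (hFBu j).isPWO, hcos j⟩ with hfam
      have hmemN : ∀ j, (fam j).hsum ∈ NovikovSubring K G := by
        intro j
        refine ⟨?_, ?_⟩
        · intro g hg
          obtain ⟨_, ⟨k, rfl⟩, hk⟩ := HahnSeries.SummableFamily.support_hsum_subset hg
          exact BA.supp_sub_G (BA.uk A t w k j) hk
        · exact (hFBu j).subset HahnSeries.SummableFamily.support_hsum_subset
      set xinf : Fin m → NovikovSubring K G := fun j => ⟨(fam j).hsum, hmemN j⟩ with hxinf
      have hpartial : ∀ (k : ℕ) (j : Fin m) (s : ℝ), s < BA.rk A t w k - BA.gamma A t →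
          ((xinf j : NovikovSubring K G) : HahnSeries ℝ K).coeff s
            = ((BA.xs A t w k j : NovikovSubring K G) : HahnSeries ℝ K).coeff s := by
        intro k j s hs
        have hsub : {l : ℕ | ((fam j) l).coeff s ≠ 0} ⊆
            ↑((hcos j s).toFinset ∪ Finset.range k) := by
          intro l hl
          rw [Finset.mem_coe, Finset.mem_union]
          exact Or.inl ((hcos j s).mem_toFinset.2 hl)
        rw [show ((xinf j : NovikovSubring K G) : HahnSeries ℝ K) = (fam j).hsum from rfl]
        rw [HahnSeries.SummableFamily.coeff_hsum_eq_sum_of_subset hsub]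
        have hsplit := Finset.sum_filter_add_sum_filter_not
          ((hcos j s).toFinset ∪ Finset.range k) (fun l => l < k)
          (fun l => ((fam j) l).coeff s)
        rw [← hsplit]
        have h2 : ∑ l ∈ ((hcos j s).toFinset ∪ Finset.range k).filter (fun l => ¬ l < k),
            ((fam j) l).coeff s = 0 := by
          apply Finset.sum_eq_zero
          intro l hl
          rw [Finset.mem_filter] at hl
          push_neg at hl
          have h3 := hmono hl.2
          exact hbd l j s (by linarith)
        have h1 : ((hcos j s).toFinset ∪ Finset.range k).filter (fun l => l < k)
            = Finset.range k := by
          apply Finset.ext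
          intro l
          rw [Finset.mem_filter, Finset.mem_union, Finset.mem_range]
          constructor
          · rintro ⟨-, h⟩; exact h
          · intro h; exact ⟨Or.inr h, h⟩
        rw [h1, h2, add_zero]
        rw [BA.xs_eq_sum A t w k, Finset.sum_apply, BA.coe_sum, BA.coeff_sum]
        exact Finset.sum_congr rfl fun l _ => rfl
      obtain ⟨αm, hαm⟩ := BA.exists_alpha A
      have hsolve : w - A.mulVec xinf = 0 := by
        funext i
        have hco : ∀ s : ℝ,
            (((w - A.mulVec xinf) i : NovikovSubring K G) : HahnSeries ℝ K).coeff s = 0 := by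
          intro s
          obtain ⟨k, hk⟩ : ∃ k : ℕ,
              ¬ BA.rk A t w k < (max (s - t i) (s + BA.gamma A t - αm)) + 1 :=
            ((hfin ((max (s - t i) (s + BA.gamma A t - αm)) + 1)).infinite_compl).nonempty
          push_neg at hk
          have hk1 : s < BA.rk A t w k + t i := by
            have := le_max_left (s - t i) (s + BA.gamma A t - αm)
            linarith
          have hk2 : s < αm + (BA.rk A t w k - BA.gamma A t) := by
            have := le_max_right (s - t i) (s + BA.gamma A t - αm)
            linarith
          have hsplit : w - A.mulVec xinf
              = BA.resid A w (BA.xs A t w k) - A.mulVec (xinf - BA.xs A t w k) := by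
            rw [BA.resid, Matrix.mulVec_sub]
            abel
          have hterm2 : ((A.mulVec (xinf - BA.xs A t w k) i : NovikovSubring K G) :
              HahnSeries ℝ K).coeff s = 0 := by
            rw [BA.coe_mulVec, BA.coeff_sum]
            apply Finset.sum_eq_zero
            intro j _
            apply BA.mul_coeff_eq_zero (fun u hu => hαm i j u hu) ?_ hk2
            intro u hu
            rw [Pi.sub_apply]
            push_cast
            rw [HahnSeries.coeff_sub, hpartial k j u hu, sub_self]
          rw [hsplit, Pi.sub_apply]
          push_cast
          rw [HahnSeries.coeff_sub, hterm2, sub_zero]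
          exact BA.lev_coeff_zero t i s hk1
        apply Subtype.ext
        show (((w - A.mulVec xinf) i : NovikovSubring K G) : HahnSeries ℝ K)
          = ((0 : NovikovSubring K G) : HahnSeries ℝ K)
        rw [ZeroMemClass.coe_zero, ← HahnSeries.coeff_fun_eq_zero_iff]
        funext s
        exact hco s
      refine ⟨xinf, ?_, ?_⟩
      · apply cond1
        intro j s hs
        rw [hpartial 0 j s hs, BA.xs_zero]
        simp
      · have hval : nubartS t (w - A.mulVec xinf) = ⊤ := BA.nubart_top t hsolve
        rw [hval]
        exact (top_le_iff.1 (hval ▸ le_iSup (fun x => nubartS t (w - A.mulVec x)) xinf)).symm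
end
end

section
/- Let G' ⊇ G be additive subgroups of ℝ, A an n×m matrix over Λ_K(G), and w ∈ Λ_K(G)^n. For any x ∈ Λ_K(G')^m, write x' for the vector obtained from x by keeping in each coordinate only the terms with exponents in G. Then ν̄_{t⃗}(w − A x') ≥ ν̄_{t⃗}(w − A x) for any t⃗ ∈ ℝ^n; consequently sup_{x ∈ Λ_K(G')^m} ν̄_{t⃗}(w − Ax) = sup_{x ∈ Λ_K(G)^m} ν̄_{t⃗}(w − Ax). -/
set_option synthInstance.maxHeartbeats 1000000
set_option maxHeartbeats 1000000
open Classical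
noncomputable section

variable {K : Type*} [CommRing K]

variable {G : AddSubgroup ℝ}

/-- The shifted valuation `ν̄_t(a) = min_i (ν(a_i) − t_i)` on vectors. -/
def nubartH' {K : Type*} [CommRing K] {n : ℕ} (t : Fin n → ℝ)
    (v : Fin n → HahnSeries ℝ K) : EReal :=
  ⨅ i, (nuH (v i) - ((t i : ℝ) : EReal))

/-- Truncation: keep only the terms with exponents in `G`. -/
def truncTo {K : Type*} [CommRing K] (G : AddSubgroup ℝ) (x : HahnSeries ℝ K) :
    HahnSeries ℝ K where
  coeff g := if g ∈ G then x.coeff g else 0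
  isPWO_support' := x.isPWO_support.mono (by
    intro g hg
    simp only [Function.mem_support] at hg ⊢
    intro h0
    apply hg
    split_ifs <;> simp [h0])

lemma coeff_finsetSum {α : Type*} (s : Finset α) (f : α → HahnSeries ℝ K) (g : ℝ) :
    (∑ j ∈ s, f j).coeff g = ∑ j ∈ s, (f j).coeff g := by
  classical
  induction s using Finset.induction_on with
  | empty => simp
  | insert _ _ h ih => simp [Finset.sum_insert h, HahnSeries.coeff_add, ih]

lemma nuH_le_of_support_subset {u s : HahnSeries ℝ K}
    (h : u.support ⊆ s.support) : nuH s ≤ nuH u := by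
  by_cases hu : u = 0
  · simp [nuH, hu]
  · have hne : s.coeff u.order ≠ 0 := h (HahnSeries.coeff_order_eq_zero.not.mpr hu)
    have hs : s ≠ 0 := fun h0 => hne (by simp [h0])
    rw [nuH, nuH, if_neg hu, if_neg hs]
    exact_mod_cast HahnSeries.order_le_of_coeff_ne_zero hne

lemma mulVec_coeff {n m : ℕ} (A : Matrix (Fin n) (Fin m) (HahnSeries ℝ K))
    (x : Fin m → HahnSeries ℝ K) (i : Fin n) (g : ℝ) :
    ((A.mulVec x) i).coeff g = ∑ j, (A i j * x j).coeff g := by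
  rw [Matrix.mulVec, dotProduct, coeff_finsetSum]

lemma mulVec_coeff_zero_of_compl {G : AddSubgroup ℝ} {n m : ℕ}
    (A : Matrix (Fin n) (Fin m) (HahnSeries ℝ K)) (hA : ∀ i j, (A i j).support ⊆ G)
    (x : Fin m → HahnSeries ℝ K) (hx : ∀ j, ∀ g ∈ (x j).support, g ∉ (G : Set ℝ))
    (i : Fin n) (g : ℝ) (hg : g ∈ G) : ((A.mulVec x) i).coeff g = 0 := by
  rw [mulVec_coeff]
  apply Finset.sum_eq_zero
  intro j _
  by_contra hne
  obtain ⟨a, ha, b, hb, rfl⟩ := HahnSeries.support_mul_subset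
    (Function.mem_support.2 hne)
  exact hx j b hb (by simpa using G.sub_mem hg (hA i j ha))

lemma mulVec_support_subset {G : AddSubgroup ℝ} {n m : ℕ}
    (A : Matrix (Fin n) (Fin m) (HahnSeries ℝ K)) (hA : ∀ i j, (A i j).support ⊆ G)
    (x : Fin m → HahnSeries ℝ K) (hx : ∀ j, (x j).support ⊆ G)
    (i : Fin n) : ((A.mulVec x) i).support ⊆ G := by
  intro g hg
  rw [HahnSeries.mem_support, mulVec_coeff] at hg
  obtain ⟨j, -, hj⟩ := Finset.exists_ne_zero_of_sum_ne_zero hg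
  obtain ⟨a, ha, b, hb, rfl⟩ := HahnSeries.support_mul_subset
    (Function.mem_support.2 hj)
  exact G.add_mem (hA i j ha) (hx j hb)

set_option synthInstance.maxHeartbeats 1000000 in
/-- for `G ≤ G'`, a matrix `A` and vector `w` over `Λ_K(G)`, and
`x` over `Λ_K(G')`, truncating `x` to exponents in `G` does not decrease
`ν̄_t(w − Ax)`; consequently the suprema over `Λ_K(G')^m` and `Λ_K(G)^m`
coincide. -/
theorem truncation_approximation {K : Type*} [CommRing K]
    (G G' : AddSubgroup ℝ) (hGG : G ≤ G') (n m : ℕ) (t : Fin n → ℝ)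
    (A : Matrix (Fin n) (Fin m) (HahnSeries ℝ K)) (hA : ∀ i j, InNov G (A i j))
    (w : Fin n → HahnSeries ℝ K) (hw : ∀ i, InNov G (w i)) :
    (∀ x : Fin m → HahnSeries ℝ K, (∀ j, InNov G' (x j)) →
      nubartH' t (w - A.mulVec x)
        ≤ nubartH' t (w - A.mulVec fun j => truncTo G (x j))) ∧
    (⨆ x ∈ {x : Fin m → HahnSeries ℝ K | ∀ j, InNov G' (x j)},
        nubartH' t (w - A.mulVec x))
      = (⨆ x ∈ {x : Fin m → HahnSeries ℝ K | ∀ j, InNov G (x j)},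
          nubartH' t (w - A.mulVec x)) := by
  have hAs : ∀ i j, (A i j).support ⊆ G := fun i j => (hA i j).1
  -- truncation stays in Λ_K(G)
  have htrunc_supp : ∀ x : HahnSeries ℝ K, (truncTo G x).support ⊆ (G : Set ℝ) ∩ x.support := by
    intro x g hg
    rw [HahnSeries.mem_support] at hg
    change (if g ∈ G then x.coeff g else 0) ≠ 0 at hg
    by_cases hgG : g ∈ G
    · exact ⟨hgG, by simpa [hgG] using hg⟩
    · simp [hgG] at hg
  have htruncInNov : ∀ x : HahnSeries ℝ K, InNov G' x → InNov G (truncTo G x) := by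
    intro x hx
    refine ⟨fun g hg => (htrunc_supp x hg).1, fun C => (hx.2 C).subset ?_⟩
    rintro g ⟨hg, hgC⟩
    exact ⟨(htrunc_supp x hg).2, hgC⟩
  have key : ∀ x : Fin m → HahnSeries ℝ K, (∀ j, InNov G' (x j)) →
      nubartH' t (w - A.mulVec x)
        ≤ nubartH' t (w - A.mulVec fun j => truncTo G (x j)) := by
    intro x hx
    set x' : Fin m → HahnSeries ℝ K := fun j => truncTo G (x j) with hx'def
    -- support of (w - A x') i is contained in support of (w - A x) i
    have hsub : ∀ i, ((w - A.mulVec x') i).support ⊆ ((w - A.mulVec x) i).support := by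
      intro i g hg
      have hgG : g ∈ G := by
        have hg' : g ∈ (w i + -(A.mulVec x' i)).support := by
          rwa [Pi.sub_apply, sub_eq_add_neg] at hg
        rcases HahnSeries.support_add_subset _ _ hg' with h | h
        · exact (hw i).1 h
        · rw [HahnSeries.support_neg] at h
          exact mulVec_support_subset A hAs x'
            (fun j => fun a ha => (htrunc_supp (x j) ha).1) i h
      -- coefficients of A(x - x') vanish on G
      have hdiff : ((A.mulVec (x - x')) i).coeff g = 0 := by
        apply mulVec_coeff_zero_of_compl A hAs _ _ i g hgG
        intro j a ha haG
        rw [Pi.sub_apply, HahnSeries.mem_support, HahnSeries.coeff_sub] at ha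
        have : (x' j).coeff a = (x j).coeff a := if_pos haG
        exact ha (by rw [this, sub_self])
      have hAx : ((A.mulVec x) i).coeff g = ((A.mulVec x') i).coeff g := by
        have : A.mulVec (x - x') = A.mulVec x - A.mulVec x' := by
          rw [Matrix.mulVec_sub]
        rw [this] at hdiff
        simpa [HahnSeries.coeff_sub, sub_eq_zero] using hdiff
      rw [Pi.sub_apply, HahnSeries.mem_support, HahnSeries.coeff_sub] at hg ⊢
      simpa [hAx] using hg
    unfold nubartH'
    apply iInf_mono
    intro i
    exact EReal.sub_le_sub (nuH_le_of_support_subset (hsub i)) le_rfl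
  refine ⟨key, le_antisymm ?_ ?_⟩
  · apply iSup₂_le
    intro x hx
    exact (key x hx).trans (le_iSup₂_of_le (fun j => truncTo G (x j))
      (fun j => htruncInNov (x j) (hx j)) le_rfl)
  · apply iSup₂_le
    intro x hx
    exact le_iSup₂_of_le x (fun j => ⟨fun g hg => hGG ((hx j).1 hg), (hx j).2⟩) le_rfl
end
end
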